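/- Let S' → ℝ^n = ℝ^p × ℝ^{n−p} be a succession of permissible blow-ups, and let B be a closed semi-algebraic subset of S' with dim B < n which is almost strictly allowable in S'. Then there is a succession of permissible blow-ups μ: S̃' → S' such that μ^{-1}(B) is strictly allowable. -/

import Mathlib

/-!
Common definitions: semi-algebraic sets and maps, dimension via the Zariski closure,
Nash submanifolds and Nash maps, generically defined differential forms and their
(absolute and oriented) integrals, faces and (strict) allowability, permissible blow-ups
(encoded combinatorially through their fans of monomial charts), logarithmic forms, and
the complex (admissible) setting.
-/

open MeasureTheory Set
open scoped ENNReal NNReal Topology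

noncomputable section

/-- `ℝ^ι` as a Euclidean space. -/
abbrev Euc (ι : Type) [Fintype ι] : Type := EuclideanSpace ℝ ι

namespace SA

variable {ι κ : Type} [Fintype ι] [Fintype κ]

/-- A subset of `ℝ^ι` is semi-algebraic if it is a finite union of basic sets,
each defined by finitely many polynomial equations and strict inequalities. -/
def IsSemialgebraic (S : Set (Euc ι)) : Prop :=
  ∃ (N : ℕ) (P Q : Fin N → Finset (MvPolynomial ι ℝ)),
    S = ⋃ a : Fin N, {x | (∀ f ∈ P a, MvPolynomial.eval (fun i => x i) f = 0) ∧
      ∀ g ∈ Q a, 0 < MvPolynomial.eval (fun i => x i) g}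

/-- The ideal of polynomials vanishing on a subset of `ℝ^ι`. -/
def vanishingIdeal (S : Set (Euc ι)) : Ideal (MvPolynomial ι ℝ) where
  carrier := {f | ∀ x ∈ S, MvPolynomial.eval (fun i => x i) f = 0}
  zero_mem' := by intro x _; simp
  add_mem' := by intro a b ha hb x hx; simp [ha x hx, hb x hx]
  smul_mem' := by intro c a ha x hx; simp [ha x hx]

/-- The (real) Zariski closure of a subset of `ℝ^ι`. -/
def zariskiClosure (S : Set (Euc ι)) : Set (Euc ι) :=
  {x | ∀ f ∈ vanishingIdeal S, MvPolynomial.eval (fun i => x i) f = 0}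

/-- The dimension of a semi-algebraic set: the Krull dimension of the coordinate ring
of its Zariski closure. -/
def dim (S : Set (Euc ι)) : WithBot ℕ∞ :=
  ringKrullDim (MvPolynomial ι ℝ ⧸ vanishingIdeal S)

/-- Projection of `ℝ^(ι ⊕ κ)` onto the first group of coordinates. -/
def projL (z : Euc (ι ⊕ κ)) : Euc ι := WithLp.toLp 2 (fun i => z (Sum.inl i))

/-- Projection of `ℝ^(ι ⊕ κ)` onto the second group of coordinates. -/
def projR (z : Euc (ι ⊕ κ)) : Euc κ := WithLp.toLp 2 (fun j => z (Sum.inr j))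

/-- A map defined on a semi-algebraic set is semi-algebraic if its graph is. -/
def IsSemialgebraicOn (S : Set (Euc ι)) (f : Euc ι → Euc κ) : Prop :=
  IsSemialgebraic {z : Euc (ι ⊕ κ) | projL z ∈ S ∧ projR z = f (projL z)}

/-- A real-valued function on a semi-algebraic set is semi-algebraic if its graph is. -/
def IsSemialgebraicFunOn (S : Set (Euc ι)) (f : Euc ι → ℝ) : Prop :=
  IsSemialgebraic {z : Euc (ι ⊕ Fin 1) | projL z ∈ S ∧ z (Sum.inr 0) = f (projL z)}

/-- `M` is a `d`-dimensional smooth submanifold of `ℝ^ι`: near each of its points it can be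
straightened, by a diffeomorphism between open sets, onto a `d`-dimensional coordinate
subspace. -/
def IsSmoothSubmanifold (d : ℕ) (M : Set (Euc ι)) : Prop :=
  ∀ x ∈ M, ∃ (U V : Set (Euc ι)) (φ ψ : Euc ι → Euc ι) (J : Finset ι),
    IsOpen U ∧ x ∈ U ∧ IsOpen V ∧
    ContDiffOn ℝ ((⊤ : ℕ∞) : WithTop ℕ∞) φ U ∧ ContDiffOn ℝ ((⊤ : ℕ∞) : WithTop ℕ∞) ψ V ∧
    Set.MapsTo φ U V ∧ (∀ y ∈ U, ψ (φ y) = y) ∧ (∀ y ∈ V, φ (ψ y) = y) ∧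
    J.card = d ∧ φ '' (U ∩ M) = V ∩ {y | ∀ i ∉ J, y i = 0}

/-- A Nash submanifold of `ℝ^ι` of dimension `d`: a semi-algebraic subset which is a
`d`-dimensional smooth submanifold (such a set is automatically Nash). -/
def IsNashSubmanifold (d : ℕ) (M : Set (Euc ι)) : Prop :=
  IsSemialgebraic M ∧ IsSmoothSubmanifold d M

/-- A map is smooth on a subset `S` if near each point of `S` it admits a smooth local
extension. -/
def SmoothOnSet (S : Set (Euc ι)) (f : Euc ι → Euc κ) : Prop :=
  ∀ x ∈ S, ∃ (U : Set (Euc ι)) (g : Euc ι → Euc κ), IsOpen U ∧ x ∈ U ∧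
    ContDiffOn ℝ ((⊤ : ℕ∞) : WithTop ℕ∞) g U ∧ Set.EqOn f g (S ∩ U)

/-- A Nash map on `S`: semi-algebraic and smooth on `S`. -/
def IsNashMapOn (S : Set (Euc ι)) (f : Euc ι → Euc κ) : Prop :=
  IsSemialgebraicOn S f ∧ SmoothOnSet S f

/-- A Nash (real-valued) function on `S`: semi-algebraic and smooth on `S`. -/
def IsNashFunOn (S : Set (Euc ι)) (f : Euc ι → ℝ) : Prop :=
  IsSemialgebraicFunOn S f ∧
  ∀ x ∈ S, ∃ (U : Set (Euc ι)) (g : Euc ι → ℝ), IsOpen U ∧ x ∈ U ∧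
    ContDiffOn ℝ ((⊤ : ℕ∞) : WithTop ℕ∞) g U ∧ Set.EqOn f g (S ∩ U)

/-- A Nash diffeomorphism from `U` onto `U'`: a bijective Nash map with Nash inverse. -/
def IsNashDiffeoOn (U : Set (Euc ι)) (U' : Set (Euc κ)) (f : Euc ι → Euc κ) : Prop :=
  IsNashMapOn U f ∧ Set.BijOn f U U' ∧
    ∃ g : Euc κ → Euc ι, IsNashMapOn U' g ∧ Set.InvOn g f U U'

/-- A smooth `m`-form on `Ω ⊆ ℝ^ι`, encoded as a function of a point and an `m`-tuple of
vectors: at each point of `Ω` it is an alternating multilinear form, and for each fixed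
tuple of vectors it depends smoothly on the point. -/
def IsSmoothForm (m : ℕ) (Ω : Set (Euc ι)) (ψ : Euc ι → (Fin m → Euc ι) → ℝ) : Prop :=
  (∀ x ∈ Ω, ∃ A : AlternatingMap ℝ (Euc ι) ℝ (Fin m), ψ x = ⇑A) ∧
  ∀ v : Fin m → Euc ι, ContDiffOn ℝ ((⊤ : ℕ∞) : WithTop ℕ∞) (fun x => ψ x v) Ω

/-- Pull-back of an `m`-form `ψ` along a map `h`, differentiated within the set `U`. -/
def pullback {m : ℕ} (h : Euc ι → Euc κ) (U : Set (Euc ι))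
    (ψ : Euc κ → (Fin m → Euc κ) → ℝ) : Euc ι → (Fin m → Euc ι) → ℝ :=
  fun x v => ψ (h x) fun j => fderivWithin ℝ h U x (v j)

/-- The orthonormal `m`-frames tangent to `U` at `x`. -/
def tangentFrames (m : ℕ) (U : Set (Euc ι)) (x : Euc ι) : Set (Fin m → Euc ι) :=
  {v | Orthonormal ℝ v ∧ ∀ j, v j ∈ tangentConeAt ℝ U x}

/-- The integral `∫_U |φ|` of the density of an `m`-form `φ` over `U`: the integral, with
respect to the `m`-dimensional Hausdorff measure, of the norm of `φ` on tangent
orthonormal frames. -/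
def absIntegral (m : ℕ) (U : Set (Euc ι)) (φ : Euc ι → (Fin m → Euc ι) → ℝ) : ℝ≥0∞ :=
  ∫⁻ x in U, ENNReal.ofReal (⨆ v ∈ tangentFrames m U x, |φ x v|) ∂μH[(m : ℝ)]

/-- An orientation of an `m`-dimensional submanifold `U`, presented as a continuous choice
of tangent orthonormal `m`-frames. -/
def IsOrientationFrame (m : ℕ) (U : Set (Euc ι)) (o : Euc ι → Fin m → Euc ι) : Prop :=
  ContinuousOn o U ∧ ∀ x ∈ U, o x ∈ tangentFrames m U x

/-- The integral `∫_U φ` of an `m`-form `φ` over `U`, oriented by the frame `o`. -/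
def orIntegral (m : ℕ) (U : Set (Euc ι)) (o : Euc ι → Fin m → Euc ι)
    (φ : Euc ι → (Fin m → Euc ι) → ℝ) : ℝ :=
  ∫ x in U, φ x (o x) ∂μH[(m : ℝ)]

/-- The standard (positively oriented, orthonormal) frame of `ℝ^m`. -/
def stdFrame (m : ℕ) : Fin m → Euc (Fin m) := fun j => EuclideanSpace.single j 1

/-- `δ(f)`: the maximal cardinality of the finite fibres of `f` restricted to `S`
(`0` if every fibre is infinite). -/
def delta (S : Set (Euc ι)) (f : Euc ι → Euc κ) : ℕ :=
  sSup {k : ℕ | ∃ u ∈ f '' S, (S ∩ f ⁻¹' {u}).Finite ∧ (S ∩ f ⁻¹' {u}).ncard = k}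

/-- A member of `Op(S)` for a semi-algebraic set `S` of dimension `≤ m`: if `dim S = m`, a
dense open semi-algebraic subset `U ⊆ S` which is an `m`-dimensional Nash submanifold with
`dim (S ∖ U) < m`; integrals of `m`-forms over `S` are computed over such a `U`. By the
convention of the paper, if `dim S < m` the integral is set to `0`, i.e. `U = ∅`. -/
def PullbackDomain (m : ℕ) (S U : Set (Euc ι)) : Prop :=
  (dim S = ((m : ℕ∞) : WithBot ℕ∞) ∧ U ⊆ S ∧ (∃ O, IsOpen O ∧ U = S ∩ O) ∧
    IsSemialgebraic U ∧ IsNashSubmanifold m U ∧ dim (S \ U) < ((m : ℕ∞) : WithBot ℕ∞)) ∨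
  (dim S < ((m : ℕ∞) : WithBot ℕ∞) ∧ U = ∅)

/-- A domain over which the pull-back of an `m`-form along `h` is defined: a member of
`Op(S)` on which `h` is a Nash map. -/
def IntegralDomain (m : ℕ) (S U : Set (Euc ι)) (h : Euc ι → Euc κ) : Prop :=
  PullbackDomain m S U ∧ IsNashMapOn U h

/-- The face of `ℝ^(ι⊕κ)` cut out by the vanishing of the distinguished coordinates in `I`. -/
def face (κ : Type) [Fintype κ] (I : Finset ι) : Set (Euc (ι ⊕ κ)) :=
  {z | ∀ i ∈ I, z (Sum.inl i) = 0}

/-- Allowability: the intersection with every proper face has dimension strictly smaller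
than the dimension of the face. -/
def Allowable (C : Set (Euc (ι ⊕ κ))) : Prop :=
  ∀ I : Finset ι, I.Nonempty →
    dim (C ∩ face κ I) + ((I.card : ℕ∞) : WithBot ℕ∞) <
      (((Fintype.card ι + Fintype.card κ : ℕ) : ℕ∞) : WithBot ℕ∞)

/-- Strict allowability with respect to the face cut out by `I`: the Zariski closure of the
intersection contains no face. -/
def StrictlyAllowableWrt (C : Set (Euc (ι ⊕ κ))) (I : Finset ι) : Prop :=
  ∀ I' : Finset ι, ¬ (face κ I' ⊆ zariskiClosure (C ∩ face κ I))

/-- Strict allowability: strict allowability with respect to every face (including the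
ambient space itself). -/
def StrictlyAllowable (C : Set (Euc (ι ⊕ κ))) : Prop :=
  ∀ I : Finset ι, StrictlyAllowableWrt C I

/-- Almost strict allowability: strict allowability with respect to every proper face. -/
def AlmostStrictlyAllowable (C : Set (Euc (ι ⊕ κ))) : Prop :=
  ∀ I : Finset ι, I.Nonempty → StrictlyAllowableWrt C I

/-- The set of columns ("rays") of a matrix. -/
def raysOf {p : ℕ} (M : Matrix (Fin p) (Fin p) ℤ) : Finset (Fin p → ℤ) :=
  Finset.univ.image fun j i => M i j

/-- The set of columns of `M` indexed by `J`. -/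
def colSet {p : ℕ} (M : Matrix (Fin p) (Fin p) ℤ) (J : Finset (Fin p)) :
    Finset (Fin p → ℤ) :=
  J.image fun j i => M i j

/-- Star subdivision of a smooth fan (recorded through its maximal cones, each given by the
matrix of its ray generators) at the cone spanned by the rays in `R`. -/
def starSubdiv {p : ℕ} (F : Finset (Matrix (Fin p) (Fin p) ℤ)) (R : Finset (Fin p → ℤ)) :
    Finset (Matrix (Fin p) (Fin p) ℤ) :=
  F.filter (fun M => ¬ R ⊆ raysOf M) ∪
  (F.filter (fun M => R ⊆ raysOf M)).biUnion fun M =>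
    (Finset.univ.filter fun j : Fin p => (fun i => M i j) ∈ R).image fun j =>
      M.updateCol j fun i => ∑ v ∈ R, v i

/-- Successions of permissible blow-ups over a given stage, recorded combinatorially through
the fans of their monomial charts: each permissible blow-up is the star subdivision of the
fan at a face of codimension `≥ 2` (a cone spanned by at least two of the rays of a maximal
cone). -/
inductive IsBlowupTower (p : ℕ) :
    Finset (Matrix (Fin p) (Fin p) ℤ) → Finset (Matrix (Fin p) (Fin p) ℤ) → Prop
  | refl (F : Finset (Matrix (Fin p) (Fin p) ℤ)) : IsBlowupTower p F F
  | step (F₀ F : Finset (Matrix (Fin p) (Fin p) ℤ)) (h : IsBlowupTower p F₀ F)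
      (M : Matrix (Fin p) (Fin p) ℤ) (hM : M ∈ F) (J : Finset (Fin p)) (hJ : 2 ≤ J.card) :
      IsBlowupTower p F₀ (starSubdiv F (colSet M J))

/-- A succession of permissible blow-ups of the base space itself (whose fan consists of the
single standard cone, with ray matrix `1`). -/
def IsBlowupFan (p : ℕ) (F : Finset (Matrix (Fin p) (Fin p) ℤ)) : Prop :=
  IsBlowupTower p {1} F

/-- A monomial chart map `ℝ^p × ℝ^q → ℝ^p × ℝ^q` of a succession of permissible blow-ups:
the monomial map with (nonnegative) exponent matrix `M` on the first factor and the
identity on the second. -/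
def monMap (p q : ℕ) (M : Matrix (Fin p) (Fin p) ℤ) (z : Euc (Fin p ⊕ Fin q)) :
    Euc (Fin p ⊕ Fin q) :=
  WithLp.toLp 2 (Sum.elim (fun i => ∏ j : Fin p, z (Sum.inl j) ^ (M i j).toNat) fun j => z (Sum.inr j))

/-- The monomial map with integer exponent matrix `N` (a transition map between charts). -/
def monMapZ (p q : ℕ) (N : Matrix (Fin p) (Fin p) ℤ) (z : Euc (Fin p ⊕ Fin q)) :
    Euc (Fin p ⊕ Fin q) :=
  WithLp.toLp 2 (Sum.elim (fun i => ∏ j : Fin p, z (Sum.inl j) ^ (N i j)) fun j => z (Sum.inr j))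

/-- The locus where the monomial map with exponent matrix `N` is regular. -/
def transDomain (p q : ℕ) (N : Matrix (Fin p) (Fin p) ℤ) : Set (Euc (Fin p ⊕ Fin q)) :=
  {z | ∀ i j, N i j < 0 → z (Sum.inl j) ≠ 0}

/-- A family of subsets of the charts of the succession of blow-ups with fan `F` defines a
global subset iff it is compatible with the transition maps between charts. -/
def CompatibleFamily (p q : ℕ) (F : Finset (Matrix (Fin p) (Fin p) ℤ))
    (B : Matrix (Fin p) (Fin p) ℤ → Set (Euc (Fin p ⊕ Fin q))) : Prop :=
  ∀ M ∈ F, ∀ M' ∈ F, ∀ z ∈ transDomain p q (M'⁻¹ * M),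
    monMapZ p q (M'⁻¹ * M) z ∈ transDomain p q (M⁻¹ * M') →
    monMapZ p q (M⁻¹ * M') (monMapZ p q (M'⁻¹ * M) z) = z →
    (z ∈ B M ↔ monMapZ p q (M'⁻¹ * M) z ∈ B M')

/-- The basic logarithmic `m`-form
`(dr_{i₁}/r_{i₁}) ∧ ⋯ ∧ (dr_{i_k}/r_{i_k}) ∧ dx_{j₁} ∧ ⋯ ∧ dx_{j_{m-k}}`
(`P = {i₁ < ⋯ < i_k}`, `Q = {j₁ < ⋯ < j_{m-k}}`) evaluated at the point `z` on the
vectors `v`. -/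
def logTerm (p q : ℕ) (m : ℕ) (P : Finset (Fin p)) (Q : Finset (Fin q))
    (z : Euc (Fin p ⊕ Fin q)) (v : Fin m → Euc (Fin p ⊕ Fin q)) : ℝ :=
  Matrix.det (Matrix.of fun l k : Fin m =>
    if hl : (l : ℕ) < P.card then
      v k (Sum.inl ((P.orderIsoOfFin rfl) ⟨l, hl⟩)) /
        z (Sum.inl ((P.orderIsoOfFin rfl) ⟨l, hl⟩))
    else if hq : (l : ℕ) - P.card < Q.card then
      v k (Sum.inr ((Q.orderIsoOfFin rfl) ⟨(l : ℕ) - P.card, hq⟩))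
    else 0)

/-- An `m`-form on `ℝ^p × ℝ^q` with logarithmic singularities along the hyperplanes
`{r_i = 0}`: away from these hyperplanes it is a sum of basic logarithmic forms with
coefficients smooth on all of `ℝ^p × ℝ^q`. -/
def IsLogForm (p q : ℕ) (m : ℕ)
    (ω : Euc (Fin p ⊕ Fin q) → (Fin m → Euc (Fin p ⊕ Fin q)) → ℝ) : Prop :=
  ∃ a : Finset (Fin p) × Finset (Fin q) → Euc (Fin p ⊕ Fin q) → ℝ,
    (∀ s, ContDiff ℝ ((⊤ : ℕ∞) : WithTop ℕ∞) (a s)) ∧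
    ∀ z, (∀ i : Fin p, z (Sum.inl i) ≠ 0) → ∀ v,
      ω z v = ∑ s ∈ Finset.univ.filter
          (fun s : Finset (Fin p) × Finset (Fin q) => s.1.card + s.2.card = m),
        a s z * logTerm p q m s.1 s.2 z v

section Projections
variable {p q' : ℕ}

/-- The projection `ℝ^p × ℝ^{q'+1} → ℝ^p × ℝ^{q'}` forgetting the last coordinate `x_n`. -/
def pr1 (z : Euc (Fin p ⊕ Fin (q' + 1))) : Euc (Fin p ⊕ Fin q') :=
  WithLp.toLp 2 (Sum.elim (fun i => z (Sum.inl i)) fun j => z (Sum.inr j.castSucc))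

/-- The projection `ℝ^p × ℝ^{q'} → ℝ^p` onto the first group of coordinates. -/
def pr2 (w : Euc (Fin p ⊕ Fin q')) : Euc (Fin p) := WithLp.toLp 2 (fun i => w (Sum.inl i))

/-- Adjoining a value of the last coordinate `x_n`. -/
def combineLast (w : Euc (Fin p ⊕ Fin q')) (s : ℝ) : Euc (Fin p ⊕ Fin (q' + 1)) :=
  WithLp.toLp 2 (Sum.elim (fun i => w (Sum.inl i)) fun j =>
    if h : (j : ℕ) < q' then w (Sum.inr ⟨j, h⟩) else s)

/-- The linear change of variables `x_i ↦ x_i + c_i x_n` (`p < i < n`), `x_n ↦ x_n`. -/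
def lc (c : Fin q' → ℝ) (z : Euc (Fin p ⊕ Fin (q' + 1))) : Euc (Fin p ⊕ Fin (q' + 1)) :=
  WithLp.toLp 2 (Sum.elim (fun i => z (Sum.inl i)) fun j =>
    if h : (j : ℕ) < q' then z (Sum.inr j) + c ⟨j, h⟩ * z (Sum.inr (Fin.last q')) else
      z (Sum.inr j))

/-- Condition (F): over the neighbourhood `V₀ = {|r_i| < ρ₀}` of the origin, the projection
forgetting `x_n`, restricted to `A ∩ {r_i = 0}`, has finite fibres (for each `i`). -/
def ConditionF (p q' : ℕ) (ρ₀ : ℝ) (A : Set (Euc (Fin p ⊕ Fin (q' + 1)))) : Prop :=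
  ∀ i : Fin p, ∀ w : Euc (Fin p ⊕ Fin q'), (∀ i' : Fin p, |w (Sum.inl i')| < ρ₀) →
    {z | z ∈ A ∧ z (Sum.inl i) = 0 ∧ pr1 z = w}.Finite

/-- `v(A|x_n; r)`: the supremum, over the points `T` of `ℝ^{n-1}` lying over `r ∈ ℝ^p`, of
the Lebesgue measure (with respect to `dx_n`) of the fibre of `A` over `T`. -/
def vfun (A : Set (Euc (Fin p ⊕ Fin (q' + 1)))) (r : Euc (Fin p)) : ℝ≥0∞ :=
  ⨆ w : {w : Euc (Fin p ⊕ Fin q') // pr2 w = r},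
    volume {s : ℝ | combineLast w.1 s ∈ A}

end Projections

/-- A Zariski open subset of `ℝ^ι`. -/
def IsZariskiOpen (W : Set (Euc ι)) : Prop :=
  ∃ T : Set (MvPolynomial ι ℝ),
    W = {x | ∃ f ∈ T, MvPolynomial.eval (fun i => x i) f ≠ 0}

/-- The set of points of `V` that are nonsingular in dimension `d`: near such a point, `V`
is cut out by `card ι − d` polynomials vanishing on `V` whose gradients at the point are
linearly independent. -/
def RegPts (d : ℕ) (V : Set (Euc ι)) : Set (Euc ι) :=
  {x | x ∈ V ∧ ∃ f : Fin (Fintype.card ι - d) → MvPolynomial ι ℝ,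
    (∀ j, f j ∈ vanishingIdeal V) ∧
    (∃ O : Set (Euc ι), IsOpen O ∧ x ∈ O ∧
      V ∩ O = {y | y ∈ O ∧ ∀ j, MvPolynomial.eval (fun i => y i) (f j) = 0}) ∧
    LinearIndependent ℝ
      (fun j => (WithLp.toLp 2 (fun i => MvPolynomial.eval (fun i' => x i')
        (MvPolynomial.pderiv i (f j))) : Euc ι))}

/-- The standard `m`-simplex `Δ^m ⊆ ℝ^m`. -/
def simplex (m : ℕ) : Set (Euc (Fin m)) := {x | (∀ i, 0 ≤ x i) ∧ ∑ i, x i ≤ 1}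

/-- The relative interior of the face of `Δ^m` given by the vanishing of the coordinates in
`J` and (if `b = true`) the equation `∑ x_i = 1`. -/
def relintFace (m : ℕ) (J : Finset (Fin m)) (b : Bool) : Set (Euc (Fin m)) :=
  {x | (∀ i ∈ J, x i = 0) ∧ (∀ i ∉ J, 0 < x i) ∧
    (if b then ∑ i, x i = 1 else ∑ i, x i < 1)}

/-- The vertices of `Δ^m`: `vert m 0 = 0` and `vert m (t+1) = e_t`. -/
def vert (m : ℕ) (t : Fin (m + 1)) : Euc (Fin m) :=
  WithLp.toLp 2 (fun i => if (i : ℕ) + 1 = (t : ℕ) then 1 else 0)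

/-- Barycentric coordinates of a point of `Δ^k`. -/
def bary {k : ℕ} (y : Euc (Fin k)) (l : Fin (k + 1)) : ℝ :=
  if h : (l : ℕ) = 0 then 1 - ∑ i, y i else y ⟨(l : ℕ) - 1, by have := l.isLt; omega⟩

/-- The `j`-th affine face map `Δ^k → Δ^{k+1}` (omitting the `j`-th vertex). -/
def faceMap (k : ℕ) (j : Fin (k + 2)) (y : Euc (Fin k)) : Euc (Fin (k + 1)) :=
  WithLp.toLp 2 (fun i => ∑ l : Fin (k + 1), bary y l * vert (k + 1) (j.succAbove l) i)

/-- The exterior derivative of a `k`-form (with smooth coefficients). -/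
def extDeriv (k : ℕ) (ψ : Euc ι → (Fin k → Euc ι) → ℝ) :
    Euc ι → (Fin (k + 1) → Euc ι) → ℝ :=
  fun x v => ∑ j : Fin (k + 1), (-1 : ℝ) ^ (j : ℕ) *
    fderiv ℝ (fun y => ψ y fun i => v (j.succAbove i)) x (v j)

/-- Adjoining a parameter value as an extra coordinate. -/
def pair {m : ℕ} (x : Euc (Fin m)) (t : ℝ) : Euc (Fin m ⊕ Fin 1) :=
  WithLp.toLp 2 (Sum.elim (fun i => x i) fun _ => t)

/-- `ℂ^n` identified with `ℝ^n × ℝ^n`: the `k`-th complex coordinate of the real point. -/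
def cxVec (n : ℕ) (w : Euc (Fin n ⊕ Fin n)) (k : Fin n) : ℂ :=
  Complex.ofReal (w (Sum.inl k)) + Complex.I * Complex.ofReal (w (Sum.inr k))

/-- The face `ℍ_I = {z_i = 0, i ∈ I}` of `ℂ^n`. -/
def cxFace (n : ℕ) (I : Finset (Fin n)) : Set (Euc (Fin n ⊕ Fin n)) :=
  {w | ∀ i ∈ I, cxVec n w i = 0}

/-- The divisor `D = ⋃ {z_k = 1}` of `ℂ^n`. -/
def cxD (n : ℕ) : Set (Euc (Fin n ⊕ Fin n)) :=
  {w | ∃ k : Fin n, cxVec n w k = 1}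

/-- `m`-admissibility of a closed semi-algebraic subset of `ℂ^n`:
`dim (A ∩ ℍ_I ∩ (ℂ^n − D)) ≤ m − 2|I|` for every `I`. -/
def mAdmissible (n m : ℕ) (A : Set (Euc (Fin n ⊕ Fin n))) : Prop :=
  ∀ I : Finset (Fin n),
    dim (A ∩ cxFace n I ∩ (cxD n)ᶜ) + (((2 * I.card : ℕ) : ℕ∞) : WithBot ℕ∞) ≤
      ((m : ℕ∞) : WithBot ℕ∞)

/-- The polar-coordinate parametrisation of the sector `i^α · ℂ₊`:
`(r, τ) ↦ i^α · (r/√(τ²+1)) · (1 + iτ)`. -/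
def polarC (α : ℕ) (r τ : ℝ) : ℂ :=
  Complex.I ^ α *
    (Complex.ofReal (r / Real.sqrt (τ ^ 2 + 1)) +
      Complex.I * Complex.ofReal (r * τ / Real.sqrt (τ ^ 2 + 1)))

/-- The product polar-coordinate map `π : C̃₊ⁿ → ℂⁿ` (in real coordinates), the `k`-th
factor landing in the sector of index `α k`. -/
def polarMap (n : ℕ) (α : Fin n → ℕ) (w : Euc (Fin n ⊕ Fin n)) : Euc (Fin n ⊕ Fin n) :=
  WithLp.toLp 2 (Sum.elim (fun k => (polarC (α k) (w (Sum.inl k)) (w (Sum.inr k))).re)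
    fun k => (polarC (α k) (w (Sum.inl k)) (w (Sum.inr k))).im)

/-- `C̃₊ⁿ = (ℝ_{≥0} × [−1,1])ⁿ`. -/
def tildeDomain (n : ℕ) : Set (Euc (Fin n ⊕ Fin n)) :=
  {w | ∀ k : Fin n, 0 ≤ w (Sum.inl k) ∧ |w (Sum.inr k)| ≤ 1}

/-- The map `q = q_{P,Q,R}` recording the coordinates `r_i (i ∈ P)`, `τ_j (j ∈ Q)` and
`(r_k, τ_k) (k ∈ R)`. -/
def qMap (n : ℕ) (P Q R : Finset (Fin n)) (w : Euc (Fin n ⊕ Fin n)) :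
    Euc (↥P ⊕ (↥Q ⊕ (↥R ⊕ ↥R))) :=
  WithLp.toLp 2 (Sum.elim (fun i => w (Sum.inl i.1))
    (Sum.elim (fun j => w (Sum.inr j.1))
      (Sum.elim (fun k => w (Sum.inl k.1)) fun k => w (Sum.inr k.1))))

/-- The basic complex logarithmic form `(dz₁/z₁ ∧ ⋯ ∧ dz_n/z_n) ∧ ⋀_{k∈R} dz̄_k`
evaluated at `z` on the (real) tangent vectors `v`. -/
def cxLogTerm (n m : ℕ) (R : Finset (Fin n)) (z : Euc (Fin n ⊕ Fin n))
    (v : Fin m → Euc (Fin n ⊕ Fin n)) : ℂ :=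
  Matrix.det (Matrix.of fun l k : Fin m =>
    if hl : (l : ℕ) < n then
      cxVec n (v k) ⟨l, hl⟩ / cxVec n z ⟨l, hl⟩
    else if hr : (l : ℕ) - n < R.card then
      starRingEnd ℂ (cxVec n (v k) ((R.orderIsoOfFin rfl) ⟨(l : ℕ) - n, hr⟩))
    else 0)

/-- An `(n, m−n)`-form on `ℂ^n` with logarithmic singularities along the coordinate
hyperplanes: a linear combination, with coefficients smooth functions on `ℂ^n`, of the
forms `(dz₁/z₁ ∧ ⋯ ∧ dz_n/z_n) ∧ ⋀_{k∈R} dz̄_k` with `|R| = m − n`. -/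
def IsCxLogForm (n m : ℕ)
    (ω : Euc (Fin n ⊕ Fin n) → (Fin m → Euc (Fin n ⊕ Fin n)) → ℂ) : Prop :=
  ∃ a : Finset (Fin n) → Euc (Fin n ⊕ Fin n) → ℂ,
    (∀ R, ContDiff ℝ ((⊤ : ℕ∞) : WithTop ℕ∞) (a R)) ∧
    ∀ z, (∀ k : Fin n, cxVec n z k ≠ 0) → ∀ v,
      ω z v = ∑ R ∈ Finset.univ.filter (fun R : Finset (Fin n) => R.card = m - n),
        a R z * cxLogTerm n m R z v

/-- The integral of the density `|φ|` of a complex-valued `m`-form over `U`. -/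
def absIntegralC (m : ℕ) (U : Set (Euc ι)) (φ : Euc ι → (Fin m → Euc ι) → ℂ) : ℝ≥0∞ :=
  ∫⁻ x in U, ENNReal.ofReal (⨆ v ∈ tangentFrames m U x, ‖φ x v‖) ∂μH[(m : ℝ)]

/-- The substitution homomorphism of the chart with exponent matrix `M`:
`x_i ↦ ∏_j x_j^{M i j}` on the first `p` variables. -/
def chartHom (k : Type) [CommSemiring k] (p q : ℕ) (M : Matrix (Fin p) (Fin p) ℤ) :
    MvPolynomial (Fin p ⊕ Fin q) k →ₐ[k] MvPolynomial (Fin p ⊕ Fin q) k :=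
  MvPolynomial.aeval (Sum.elim
    (fun i => ∏ j : Fin p,
      (MvPolynomial.X (Sum.inl j) : MvPolynomial (Fin p ⊕ Fin q) k) ^ (M i j).toNat)
    fun j => MvPolynomial.X (Sum.inr j))

/-- The product of the first `p` variables. -/
def torusMon (k : Type) [CommSemiring k] (p q : ℕ) : MvPolynomial (Fin p ⊕ Fin q) k :=
  ∏ i : Fin p, MvPolynomial.X (Sum.inl i)

/-- The ideal of the strict transform, in the chart with exponent matrix `M`, of the
subvariety cut out by `P`: the saturation, with respect to the exceptional coordinates, of
the image of `P` under the chart substitution. -/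
def strictIdeal (k : Type) [CommRing k] (p q : ℕ) (M : Matrix (Fin p) (Fin p) ℤ)
    (P : Ideal (MvPolynomial (Fin p ⊕ Fin q) k)) :
    Ideal (MvPolynomial (Fin p ⊕ Fin q) k) where
  carrier := {f | ∃ N : ℕ, torusMon k p q ^ N * f ∈ Ideal.map (chartHom k p q M) P}
  zero_mem' := ⟨0, by simp⟩
  add_mem' := by
    rintro a b ⟨Na, ha⟩ ⟨Nb, hb⟩
    refine ⟨Na + Nb, ?_⟩
    have h1 : torusMon k p q ^ (Na + Nb) * (a + b)
        = torusMon k p q ^ Nb * (torusMon k p q ^ Na * a)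
          + torusMon k p q ^ Na * (torusMon k p q ^ Nb * b) := by ring
    rw [h1]
    exact Ideal.add_mem _ (Ideal.mul_mem_left _ _ ha) (Ideal.mul_mem_left _ _ hb)
  smul_mem' := by
    rintro c a ⟨N, ha⟩
    refine ⟨N, ?_⟩
    have h1 : torusMon k p q ^ N * (c • a) = c * (torusMon k p q ^ N * a) := by
      rw [smul_eq_mul]; ring
    rw [h1]
    exact Ideal.mul_mem_left _ _ ha

/-- The ideal of the face `{x_i = 0, i ∈ I}`. -/
def faceIdeal (k : Type) [CommSemiring k] (p q : ℕ) (I : Finset (Fin p)) :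
    Ideal (MvPolynomial (Fin p ⊕ Fin q) k) :=
  Ideal.span ((fun i => (MvPolynomial.X (Sum.inl i) : MvPolynomial (Fin p ⊕ Fin q) k)) '' I)

end SA

namespace SA
open MvPolynomial

variable {p q : ℕ}

lemma mem_vanishingIdeal {ι : Type} [Fintype ι] {S : Set (Euc ι)} {f : MvPolynomial ι ℝ} :
    f ∈ vanishingIdeal S ↔ ∀ x ∈ S, MvPolynomial.eval (fun i => x i) f = 0 := Iff.rfl

lemma mem_zariskiClosure {ι : Type} [Fintype ι] {S : Set (Euc ι)} {x : Euc ι} :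
    x ∈ zariskiClosure S ↔ ∀ f ∈ vanishingIdeal S, MvPolynomial.eval (fun i => x i) f = 0 :=
  Iff.rfl

lemma zariskiClosure_mono {ι : Type} [Fintype ι] {S T : Set (Euc ι)} (h : S ⊆ T) :
    zariskiClosure S ⊆ zariskiClosure T := by
  intro x hx f hf
  exact hx f (fun y hy => hf y (h hy))

/-- The restriction of a polynomial to the smallest face (setting the first group of
variables to zero). -/
noncomputable def restr (p q : ℕ) : MvPolynomial (Fin p ⊕ Fin q) ℝ →ₐ[ℝ] MvPolynomial (Fin q) ℝ :=
  MvPolynomial.aeval (Sum.elim (fun _ => 0) MvPolynomial.X)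

lemma eval_restr (x : Fin q → ℝ) (f : MvPolynomial (Fin p ⊕ Fin q) ℝ) :
    MvPolynomial.eval x (restr p q f) = MvPolynomial.eval (Sum.elim (fun _ => 0) x) f := by
  have : (MvPolynomial.eval x).comp ((restr p q : MvPolynomial (Fin p ⊕ Fin q) ℝ →ₐ[ℝ]
      MvPolynomial (Fin q) ℝ) : MvPolynomial (Fin p ⊕ Fin q) ℝ →+* MvPolynomial (Fin q) ℝ)
      = MvPolynomial.eval (Sum.elim (fun _ => 0) x) := by
    apply MvPolynomial.ringHom_ext
    · intro r; simp [restr]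
    · intro i
      cases i with
      | inl i => simp [restr]
      | inr j => simp [restr]
  exact DFunLike.congr_fun this f

lemma eval_chartHom (N : Matrix (Fin p) (Fin p) ℤ) (hN : ∀ i j, 0 ≤ N i j)
    (z : Euc (Fin p ⊕ Fin q)) (f : MvPolynomial (Fin p ⊕ Fin q) ℝ) :
    MvPolynomial.eval (fun i => z i) (chartHom ℝ p q N f)
      = MvPolynomial.eval (fun i => monMapZ p q N z i) f := by
  have : (MvPolynomial.eval (fun i => z i)).comp ((chartHom ℝ p q N :
      MvPolynomial (Fin p ⊕ Fin q) ℝ →ₐ[ℝ] MvPolynomial (Fin p ⊕ Fin q) ℝ) :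
      MvPolynomial (Fin p ⊕ Fin q) ℝ →+* MvPolynomial (Fin p ⊕ Fin q) ℝ)
      = MvPolynomial.eval (fun i => monMapZ p q N z i) := by
    apply MvPolynomial.ringHom_ext
    · intro r; simp [chartHom]
    · intro i
      cases i with
      | inl i =>
        simp only [RingHom.comp_apply, RingHom.coe_coe, chartHom, aeval_X, Sum.elim_inl,
          map_prod, map_pow, eval_X, monMapZ]
        exact Finset.prod_congr rfl fun j _ => by
          conv_rhs => rw [← Int.toNat_of_nonneg (hN i j), zpow_natCast]
      | inr j =>
        simp [chartHom, monMapZ]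
  exact DFunLike.congr_fun this f

lemma face_univ_subset (I' : Finset (Fin p)) :
    face (Fin q) (Finset.univ : Finset (Fin p)) ⊆ face (Fin q) I' := by
  intro z hz i _
  exact hz i (Finset.mem_univ i)

lemma strictlyAllowableWrt_of (C : Set (Euc (Fin p ⊕ Fin q))) (I : Finset (Fin p))
    (h : ¬ face (Fin q) (Finset.univ : Finset (Fin p)) ⊆ zariskiClosure (C ∩ face (Fin q) I)) :
    StrictlyAllowableWrt C I := by
  intro I' hsub
  exact h (fun z hz => hsub (face_univ_subset I' hz))

lemma not_faceuniv_subset {S : Set (Euc (Fin p ⊕ Fin q))} {f : MvPolynomial (Fin p ⊕ Fin q) ℝ}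
    (hf : f ∈ vanishingIdeal S) (hres : restr p q f ≠ 0) :
    ¬ face (Fin q) (Finset.univ : Finset (Fin p)) ⊆ zariskiClosure S := by
  intro hsub
  apply hres
  apply MvPolynomial.funext
  intro x
  rw [map_zero, eval_restr]
  set z : Euc (Fin p ⊕ Fin q) := WithLp.toLp 2 (Sum.elim (fun _ => 0) x : Fin p ⊕ Fin q → ℝ) with hz
  have hzface : z ∈ face (Fin q) (Finset.univ : Finset (Fin p)) := by
    intro i _; rfl
  have := hsub hzface f hf
  simpa using this

/-- Rows of a determinant-one matrix are nonzero. -/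
lemma row_ne_zero {N : Matrix (Fin p) (Fin p) ℤ} (hdet : N.det = 1) (i : Fin p) :
    ∃ j, N i j ≠ 0 := by
  by_contra hcon
  push_neg at hcon
  have := Matrix.det_eq_zero_of_row_eq_zero (A := N) i hcon
  omega

lemma col_ne_zero {N : Matrix (Fin p) (Fin p) ℤ} (hdet : N.det = 1) (j : Fin p) :
    ∃ i, N i j ≠ 0 := by
  by_contra hcon
  push_neg at hcon
  have := Matrix.det_eq_zero_of_column_eq_zero (A := N) j hcon
  omega

lemma monMapZ_inl (N : Matrix (Fin p) (Fin p) ℤ) (z : Euc (Fin p ⊕ Fin q)) (i : Fin p) :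
    monMapZ p q N z (Sum.inl i) = ∏ j : Fin p, z (Sum.inl j) ^ (N i j) := rfl

lemma monMapZ_inr (N : Matrix (Fin p) (Fin p) ℤ) (z : Euc (Fin p ⊕ Fin q)) (j : Fin q) :
    monMapZ p q N z (Sum.inr j) = z (Sum.inr j) := rfl

/-- The monomial map fixes the smallest face (rows nonzero). -/
lemma monMapZ_fix (N : Matrix (Fin p) (Fin p) ℤ) (hdet : N.det = 1)
    (z : Euc (Fin p ⊕ Fin q)) (hz : ∀ i, z (Sum.inl i) = 0) :
    monMapZ p q N z = z := by
  ext k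
  cases k with
  | inl i =>
    rw [monMapZ_inl, hz i]
    obtain ⟨j, hj⟩ := row_ne_zero hdet i
    exact Finset.prod_eq_zero (Finset.mem_univ j) (by rw [hz j]; exact zero_zpow _ hj)
  | inr j => rfl

open Classical in
/-- Points of a coordinate hyperplane are sent into the corresponding face. -/
lemma monMapZ_mem_face (N : Matrix (Fin p) (Fin p) ℤ) (z : Euc (Fin p ⊕ Fin q))
    (I : Finset (Fin p)) (hz : ∀ j ∈ I, z (Sum.inl j) = 0) :
    monMapZ p q N z ∈ face (Fin q) (Finset.univ.filter fun i => ∃ j ∈ I, 1 ≤ N i j) := by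
  intro i hi
  obtain ⟨j, hjI, hj⟩ := (Finset.mem_filter.1 hi).2
  rw [monMapZ_inl]
  exact Finset.prod_eq_zero (Finset.mem_univ j) (by rw [hz j hjI]; exact zero_zpow _ (by omega))

lemma chartHom_mem_vanishingIdeal (N : Matrix (Fin p) (Fin p) ℤ) (hN : ∀ i j, 0 ≤ N i j)
    {S : Set (Euc (Fin p ⊕ Fin q))} {f : MvPolynomial (Fin p ⊕ Fin q) ℝ}
    (hf : f ∈ vanishingIdeal S) :
    chartHom ℝ p q N f ∈ vanishingIdeal (monMapZ p q N ⁻¹' S) := by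
  intro z hz
  rw [eval_chartHom N hN z f]
  exact hf _ hz

lemma zariskiClosure_preimage (N : Matrix (Fin p) (Fin p) ℤ) (hN : ∀ i j, 0 ≤ N i j)
    (S : Set (Euc (Fin p ⊕ Fin q))) :
    zariskiClosure (monMapZ p q N ⁻¹' S) ⊆ monMapZ p q N ⁻¹' zariskiClosure S := by
  intro x hx
  intro f hf
  have h1 := hx _ (chartHom_mem_vanishingIdeal N hN hf)
  rw [eval_chartHom N hN x f] at h1
  exact h1

end SA
namespace SA
open MvPolynomial

variable {p q : ℕ}

/-- Substitution killing the variables in `s`. -/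
noncomputable def killVars (p q : ℕ) (s : Finset (Fin p ⊕ Fin q)) :
    MvPolynomial (Fin p ⊕ Fin q) ℝ →ₐ[ℝ] MvPolynomial (Fin p ⊕ Fin q) ℝ :=
  MvPolynomial.aeval (fun i => if i ∈ s then 0 else MvPolynomial.X i)

lemma killVars_comp (s s' : Finset (Fin p ⊕ Fin q)) (hss : s ⊆ s') :
    (killVars p q s').comp (killVars p q s) = killVars p q s' := by
  apply MvPolynomial.algHom_ext
  intro i
  by_cases hi : i ∈ s
  · simp [killVars, hi, hss hi]
  · simp [killVars, hi]

lemma killVars_ker_prime (s : Finset (Fin p ⊕ Fin q)) :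
    (RingHom.ker (killVars p q s).toRingHom).IsPrime :=
  RingHom.ker_isPrime _

lemma killVars_ker_mono {s s' : Finset (Fin p ⊕ Fin q)} (hss : s ⊆ s')
    (hne : ∃ i ∈ s', i ∉ s) :
    RingHom.ker (killVars p q s).toRingHom < RingHom.ker (killVars p q s').toRingHom := by
  obtain ⟨i, hi', hi⟩ := hne
  have h1 : MvPolynomial.X i ∈ RingHom.ker (killVars p q s').toRingHom := by
    rw [RingHom.mem_ker]
    show killVars p q s' (MvPolynomial.X i) = 0
    simp [killVars, hi']
  have h2 : MvPolynomial.X i ∉ RingHom.ker (killVars p q s).toRingHom := by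
    rw [RingHom.mem_ker]
    show ¬ killVars p q s (MvPolynomial.X i) = 0
    simp [killVars, hi]
  have hle : RingHom.ker (killVars p q s).toRingHom ≤ RingHom.ker (killVars p q s').toRingHom := by
    intro f hf
    rw [RingHom.mem_ker] at hf ⊢
    have hcmp : killVars p q s' f = (killVars p q s').comp (killVars p q s) f := by
      rw [killVars_comp s s' hss]
    show killVars p q s' f = 0
    rw [hcmp]
    show killVars p q s' (killVars p q s f) = 0
    rw [show killVars p q s f = 0 from hf, map_zero]
  exact lt_of_le_of_ne hle (fun heq => h2 (heq ▸ h1))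

lemma ringKrullDim_mvPoly_ge :
    (((p + q : ℕ) : ℕ∞) : WithBot ℕ∞) ≤ ringKrullDim (MvPolynomial (Fin p ⊕ Fin q) ℝ) := by
  classical
  set n := p + q with hn
  let sfun : Fin (n + 1) → Finset (Fin p ⊕ Fin q) := fun k =>
    Finset.univ.filter (fun i => ((finSumFinEquiv i : Fin (p + q)) : ℕ) < (k : ℕ))
  have hmono : ∀ (k : Fin n), sfun k.castSucc ⊆ sfun k.succ := by
    intro k i hi
    rw [Finset.mem_filter] at hi ⊢
    refine ⟨Finset.mem_univ _, ?_⟩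
    have := hi.2
    simp only [Fin.coe_castSucc, Fin.val_succ] at *
    omega
  have hnew : ∀ (k : Fin n), ∃ i ∈ sfun k.succ, i ∉ sfun k.castSucc := by
    intro k
    refine ⟨finSumFinEquiv.symm ⟨(k : ℕ), by omega⟩, ?_, ?_⟩
    · rw [Finset.mem_filter]
      refine ⟨Finset.mem_univ _, ?_⟩
      simp
    · rw [Finset.mem_filter]
      push_neg
      intro _
      simp
  let series : LTSeries (PrimeSpectrum (MvPolynomial (Fin p ⊕ Fin q) ℝ)) :=
    { length := n
      toFun := fun k => ⟨RingHom.ker (killVars p q (sfun k)).toRingHom, killVars_ker_prime _⟩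
      step := fun k => by
        have := killVars_ker_mono (hmono k) (hnew k)
        exact this }
  have := Order.LTSeries.length_le_krullDim series
  rw [show ringKrullDim (MvPolynomial (Fin p ⊕ Fin q) ℝ)
    = Order.krullDim (PrimeSpectrum (MvPolynomial (Fin p ⊕ Fin q) ℝ)) from rfl]
  exact_mod_cast this

lemma exists_ne_zero_vanishing {S : Set (Euc (Fin p ⊕ Fin q))}
    (hdim : dim S < (((p + q : ℕ) : ℕ∞) : WithBot ℕ∞)) :
    ∃ h : MvPolynomial (Fin p ⊕ Fin q) ℝ, h ≠ 0 ∧ h ∈ vanishingIdeal S := by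
  by_contra hcon
  push_neg at hcon
  have hbot : vanishingIdeal S = ⊥ := by
    ext f
    simp only [Ideal.mem_bot]
    constructor
    · intro hf
      by_contra hne
      exact (hcon f hne) hf
    · rintro rfl
      exact zero_mem _
  have hker : RingHom.ker (RingHom.id (MvPolynomial (Fin p ⊕ Fin q) ℝ)) = ⊥ := by
    ext f; simp [RingHom.mem_ker]
  have e : (MvPolynomial (Fin p ⊕ Fin q) ℝ ⧸ vanishingIdeal S)
      ≃+* MvPolynomial (Fin p ⊕ Fin q) ℝ := by
    rw [hbot, ← hker]
    exact RingHom.quotientKerEquivOfSurjective Function.surjective_id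
  have heq : dim S = ringKrullDim (MvPolynomial (Fin p ⊕ Fin q) ℝ) := by
    rw [dim]
    exact RingEquiv.ringKrullDim e
  rw [heq] at hdim
  exact absurd (lt_of_le_of_lt ringKrullDim_mvPoly_ge hdim) (lt_irrefl _)

end SA
namespace SA
open MvPolynomial

variable {p q : ℕ}

lemma eval_monomial_split (z : Fin p ⊕ Fin q → ℝ) (τ : Fin p ⊕ Fin q →₀ ℕ) (c : ℝ) :
    MvPolynomial.eval z (MvPolynomial.monomial τ c)
      = c * ((∏ j : Fin p, z (Sum.inl j) ^ τ (Sum.inl j)) *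
          ∏ jq : Fin q, z (Sum.inr jq) ^ τ (Sum.inr jq)) := by
  rw [MvPolynomial.eval_monomial]
  congr 1
  rw [Finsupp.prod_fintype _ _ (fun i => pow_zero _)]
  exact Fintype.prod_sum_type _

lemma eval_chartHom_monomial (N : Matrix (Fin p) (Fin p) ℤ) (z : Fin p ⊕ Fin q → ℝ)
    (τ : Fin p ⊕ Fin q →₀ ℕ) (c : ℝ) :
    MvPolynomial.eval z (chartHom ℝ p q N (MvPolynomial.monomial τ c))
      = c * ((∏ j : Fin p, z (Sum.inl j) ^ (∑ i : Fin p, τ (Sum.inl i) * (N i j).toNat)) *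
          ∏ jq : Fin q, z (Sum.inr jq) ^ τ (Sum.inr jq)) := by
  rw [chartHom, MvPolynomial.aeval_monomial, map_mul]
  congr 1
  · simp [MvPolynomial.algebraMap_eq]
  rw [Finsupp.prod_fintype _ _ (fun i => pow_zero _), map_prod, Fintype.prod_sum_type]
  congr 1
  · -- inl part
    have step1 : ∀ i : Fin p,
        MvPolynomial.eval z ((∏ j : Fin p, (MvPolynomial.X (Sum.inl j) :
            MvPolynomial (Fin p ⊕ Fin q) ℝ) ^ (N i j).toNat) ^ τ (Sum.inl i))
          = ∏ j : Fin p, (z (Sum.inl j) ^ (N i j).toNat) ^ τ (Sum.inl i) := by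
      intro i
      rw [map_pow, map_prod]
      rw [← Finset.prod_pow]
      exact Finset.prod_congr rfl fun j _ => by rw [map_pow, MvPolynomial.eval_X]
    calc (∏ i : Fin p, MvPolynomial.eval z ((Sum.elim
            (fun i' => ∏ j : Fin p, (MvPolynomial.X (Sum.inl j) :
              MvPolynomial (Fin p ⊕ Fin q) ℝ) ^ (N i' j).toNat)
            (fun j => MvPolynomial.X (Sum.inr j)) (Sum.inl i)) ^ τ (Sum.inl i)))
        = ∏ i : Fin p, ∏ j : Fin p, (z (Sum.inl j) ^ (N i j).toNat) ^ τ (Sum.inl i) := by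
          exact Finset.prod_congr rfl fun i _ => step1 i
      _ = ∏ j : Fin p, ∏ i : Fin p, (z (Sum.inl j) ^ (N i j).toNat) ^ τ (Sum.inl i) :=
          Finset.prod_comm
      _ = ∏ j : Fin p, z (Sum.inl j) ^ (∑ i : Fin p, τ (Sum.inl i) * (N i j).toNat) := by
          refine Finset.prod_congr rfl fun j _ => ?_
          rw [← Finset.prod_pow_eq_pow_sum]
          exact Finset.prod_congr rfl fun i _ => by
            rw [← pow_mul, Nat.mul_comm]
  · exact Finset.prod_congr rfl fun jq _ => by
      rw [map_pow]; simp

lemma restr_monomial (τ : Fin p ⊕ Fin q →₀ ℕ) (c : ℝ) (hz : ∀ j : Fin p, τ (Sum.inl j) = 0) :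
    restr p q (MvPolynomial.monomial τ c)
      = MvPolynomial.monomial (Finsupp.equivFunOnFinite.symm fun jq => τ (Sum.inr jq)) c := by
  rw [restr, MvPolynomial.aeval_monomial,
    Finsupp.prod_fintype _ _ (fun i => pow_zero _), Fintype.prod_sum_type]
  have h1 : (∏ a : Fin p, (Sum.elim (fun _ => (0 : MvPolynomial (Fin q) ℝ)) MvPolynomial.X)
      (Sum.inl a) ^ τ (Sum.inl a)) = 1 := by
    refine Finset.prod_eq_one fun j _ => by rw [hz j, pow_zero]
  rw [h1, one_mul]
  rw [MvPolynomial.monomial_eq, Finsupp.prod_fintype _ _ (fun i => pow_zero _)]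
  simp [MvPolynomial.algebraMap_eq, Finsupp.coe_equivFunOnFinite_symm]

lemma restr_monomial_zero (τ : Fin p ⊕ Fin q →₀ ℕ) (c : ℝ) (j : Fin p)
    (hj : τ (Sum.inl j) ≠ 0) :
    restr p q (MvPolynomial.monomial τ c) = 0 := by
  rw [restr, MvPolynomial.aeval_monomial,
    Finsupp.prod_fintype _ _ (fun i => pow_zero _), Fintype.prod_sum_type]
  have h1 : (∏ a : Fin p, (Sum.elim (fun _ => (0 : MvPolynomial (Fin q) ℝ)) MvPolynomial.X)
      (Sum.inl a) ^ τ (Sum.inl a)) = 0 := by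
    refine Finset.prod_eq_zero (Finset.mem_univ j) ?_
    rw [Sum.elim_inl]
    exact zero_pow hj
  rw [h1, zero_mul, mul_zero]

end SA
namespace SA
open MvPolynomial

variable {p q : ℕ}

lemma chart_strictlyAllowable
    (N : Matrix (Fin p) (Fin p) ℤ) (hN : ∀ i j, 0 ≤ N i j) (hdet : N.det = 1)
    {B : Set (Euc (Fin p ⊕ Fin q))}
    (hasa : AlmostStrictlyAllowable B)
    {h : MvPolynomial (Fin p ⊕ Fin q) ℝ} (hh : h ≠ 0) (hvan : h ∈ vanishingIdeal B)
    (hadapt : ∃ σ₀ ∈ h.support, ∀ σ ∈ h.support, ∀ j : Fin p,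
        (∑ i : Fin p, (σ₀ (Sum.inl i) : ℤ) * N i j) ≤ ∑ i : Fin p, (σ (Sum.inl i) : ℤ) * N i j) :
    StrictlyAllowable (monMapZ p q N ⁻¹' B) := by
  classical
  obtain ⟨σ₀, hσ₀, hmin⟩ := hadapt
  set C := monMapZ p q N ⁻¹' B with hC
  set e : (Fin p ⊕ Fin q →₀ ℕ) → Fin p → ℕ :=
    fun σ j => ∑ i : Fin p, σ (Sum.inl i) * (N i j).toNat with he
  have heZ : ∀ σ (j : Fin p), ((e σ j : ℤ)) = ∑ i : Fin p, (σ (Sum.inl i) : ℤ) * N i j := by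
    intro σ j
    rw [he]
    push_cast
    exact Finset.sum_congr rfl fun i _ => by rw [Int.toNat_of_nonneg (hN i j)]
  have hminN : ∀ σ ∈ h.support, ∀ j, e σ₀ j ≤ e σ j := by
    intro σ hσ j
    have h1 : (e σ₀ j : ℤ) ≤ (e σ j : ℤ) := by
      rw [heZ, heZ]; exact hmin σ hσ j
    exact_mod_cast h1
  set W : (Fin p ⊕ Fin q →₀ ℕ) → (Fin p ⊕ Fin q →₀ ℕ) := fun σ =>
    Finsupp.equivFunOnFinite.symm
      (Sum.elim (fun j => e σ j - e σ₀ j) (fun jq => σ (Sum.inr jq))) with hW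
  have hWinl : ∀ σ (j : Fin p), W σ (Sum.inl j) = e σ j - e σ₀ j := fun σ j => rfl
  have hWinr : ∀ σ (jq : Fin q), W σ (Sum.inr jq) = σ (Sum.inr jq) := fun σ jq => rfl
  set htil : MvPolynomial (Fin p ⊕ Fin q) ℝ :=
    ∑ σ ∈ h.support, MvPolynomial.monomial (W σ) (MvPolynomial.coeff σ h) with hhtil
  have hkey : ∀ z : Fin p ⊕ Fin q → ℝ,
      MvPolynomial.eval z (chartHom ℝ p q N h)
        = (∏ j : Fin p, z (Sum.inl j) ^ e σ₀ j) * MvPolynomial.eval z htil := by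
    intro z
    conv_lhs => rw [← MvPolynomial.support_sum_monomial_coeff h]
    rw [map_sum, map_sum, hhtil, map_sum, Finset.mul_sum]
    apply Finset.sum_congr rfl
    intro σ hσ
    rw [eval_chartHom_monomial, eval_monomial_split]
    have hprod : (∏ j : Fin p, z (Sum.inl j) ^ e σ₀ j) *
        (∏ j : Fin p, z (Sum.inl j) ^ W σ (Sum.inl j))
        = ∏ j : Fin p, z (Sum.inl j) ^ (∑ i : Fin p, σ (Sum.inl i) * (N i j).toNat) := by
      rw [← Finset.prod_mul_distrib]
      refine Finset.prod_congr rfl fun j _ => ?_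
      rw [← pow_add, hWinl]
      have h2 : (∑ i : Fin p, σ (Sum.inl i) * (N i j).toNat) = e σ j := rfl
      rw [h2, Nat.add_sub_cancel' (hminN σ hσ j)]
    have hXpart : (∏ jq : Fin q, z (Sum.inr jq) ^ W σ (Sum.inr jq))
        = ∏ jq : Fin q, z (Sum.inr jq) ^ σ (Sum.inr jq) := by
      exact Finset.prod_congr rfl fun jq _ => by rw [hWinr]
    rw [hXpart, ← hprod]
    ring
  have hhtil_van : ∀ z : Euc (Fin p ⊕ Fin q), z ∈ C → (∀ j : Fin p, z (Sum.inl j) ≠ 0) →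
      MvPolynomial.eval (fun i => z i) htil = 0 := by
    intro z hzC hznz
    have h0 : MvPolynomial.eval (fun i => z i) (chartHom ℝ p q N h) = 0 := by
      rw [eval_chartHom N hN z h]; exact hvan _ hzC
    rw [hkey] at h0
    have hne : (∏ j : Fin p, z (Sum.inl j) ^ e σ₀ j) ≠ 0 :=
      Finset.prod_ne_zero_iff.2 fun j _ => pow_ne_zero _ (hznz j)
    exact (mul_eq_zero.1 h0).resolve_left hne
  set κ₀ : Fin q →₀ ℕ := Finsupp.equivFunOnFinite.symm (fun jq => σ₀ (Sum.inr jq)) with hκ₀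
  have hres : restr p q htil ≠ 0 := by
    have hcoeff : MvPolynomial.coeff κ₀ (restr p q htil) = MvPolynomial.coeff σ₀ h := by
      rw [hhtil, map_sum, MvPolynomial.coeff_sum]
      rw [Finset.sum_eq_single σ₀]
      · have hW0 : ∀ j : Fin p, W σ₀ (Sum.inl j) = 0 := fun j => by rw [hWinl]; omega
        rw [restr_monomial _ _ hW0]
        have hidx : (Finsupp.equivFunOnFinite.symm fun jq => W σ₀ (Sum.inr jq)) = κ₀ := by
          rw [hκ₀]
          congr 1
        rw [hidx, MvPolynomial.coeff_monomial, if_pos rfl]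
      · intro σ hσ hσne
        by_cases hzero : ∀ j : Fin p, W σ (Sum.inl j) = 0
        · rw [restr_monomial _ _ hzero, MvPolynomial.coeff_monomial, if_neg]
          intro heq2
          apply hσne
          have hee : ∀ j : Fin p, e σ j = e σ₀ j := by
            intro j
            have h1 := hzero j
            rw [hWinl] at h1
            have h2 := hminN σ hσ j
            omega
          have hinl : ∀ i : Fin p, σ (Sum.inl i) = σ₀ (Sum.inl i) := by
            have huN : Matrix.vecMul (fun i => (σ (Sum.inl i) : ℤ) - σ₀ (Sum.inl i)) N = 0 := by
              funext j
              show ∑ i, ((σ (Sum.inl i) : ℤ) - σ₀ (Sum.inl i)) * N i j = 0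
              have hdiff : ∑ i : Fin p, ((σ (Sum.inl i) : ℤ) - σ₀ (Sum.inl i)) * N i j
                  = (∑ i : Fin p, (σ (Sum.inl i) : ℤ) * N i j)
                    - ∑ i : Fin p, (σ₀ (Sum.inl i) : ℤ) * N i j := by
                rw [← Finset.sum_sub_distrib]
                exact Finset.sum_congr rfl fun i _ => by ring
              rw [hdiff, ← heZ, ← heZ, hee j, sub_self]
            have hu0 : (fun i => (σ (Sum.inl i) : ℤ) - σ₀ (Sum.inl i)) = 0 := by
              have h1 : Matrix.vecMul (fun i => (σ (Sum.inl i) : ℤ) - σ₀ (Sum.inl i)) (N * N⁻¹)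
                  = (fun i => (σ (Sum.inl i) : ℤ) - σ₀ (Sum.inl i)) := by
                rw [Matrix.mul_nonsing_inv N (by rw [hdet]; exact isUnit_one),
                  Matrix.vecMul_one]
              rw [← h1, ← Matrix.vecMul_vecMul, huN, Matrix.zero_vecMul]
            intro i
            have h3 := congrFun hu0 i
            simp only [Pi.zero_apply, sub_eq_zero] at h3
            exact_mod_cast h3
          have hinr : ∀ jq : Fin q, σ (Sum.inr jq) = σ₀ (Sum.inr jq) := by
            intro jq
            have h4 := Finsupp.equivFunOnFinite.symm.injective (heq2.trans hκ₀)
            have h5 := congrFun h4 jq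
            rw [← hWinr σ jq]
            exact h5
          apply Finsupp.ext
          intro a
          cases a with
          | inl i => exact hinl i
          | inr jq => exact hinr jq
        · push_neg at hzero
          obtain ⟨j, hj⟩ := hzero
          rw [restr_monomial_zero _ _ j hj, MvPolynomial.coeff_zero]
      · intro hns
        exact absurd hσ₀ hns
    intro hres0
    rw [hres0, MvPolynomial.coeff_zero] at hcoeff
    exact (MvPolynomial.mem_support_iff.1 hσ₀) hcoeff.symm
  have hfj : ∀ j : Fin p, ∃ fj : MvPolynomial (Fin p ⊕ Fin q) ℝ,
      (∀ z : Euc (Fin p ⊕ Fin q), z ∈ C → z (Sum.inl j) = 0 →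
        MvPolynomial.eval (fun i => z i) fj = 0) ∧ restr p q fj ≠ 0 := by
    intro j
    set φj : Finset (Fin p) :=
      Finset.univ.filter (fun i => ∃ j' ∈ ({j} : Finset (Fin p)), 1 ≤ N i j') with hφj
    have hφjne : φj.Nonempty := by
      obtain ⟨i, hi⟩ := col_ne_zero hdet j
      exact ⟨i, Finset.mem_filter.2 ⟨Finset.mem_univ _,
        ⟨j, Finset.mem_singleton_self j, by have := hN i j; omega⟩⟩⟩
    have hnsub := hasa φj hφjne Finset.univ
    rw [Set.not_subset] at hnsub
    obtain ⟨w, hwface, hwnot⟩ := hnsub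
    rw [mem_zariskiClosure] at hwnot
    push_neg at hwnot
    obtain ⟨fbar, hfbar, hfbarne⟩ := hwnot
    refine ⟨chartHom ℝ p q N fbar, ?_, ?_⟩
    · intro z hzC hzj
      rw [eval_chartHom N hN z fbar]
      apply hfbar
      refine ⟨hzC, ?_⟩
      rw [hφj]
      apply monMapZ_mem_face
      intro j' hj'
      rw [Finset.mem_singleton] at hj'
      rw [hj']
      exact hzj
    · intro hres0
      apply hfbarne
      have hwu : ∀ i : Fin p, w (Sum.inl i) = 0 := fun i => hwface i (Finset.mem_univ i)
      have h1 : MvPolynomial.eval (fun jq => w (Sum.inr jq)) (restr p q (chartHom ℝ p q N fbar))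
          = MvPolynomial.eval (fun i => w i) fbar := by
        rw [eval_restr]
        have helim : (Sum.elim (fun _ => (0:ℝ)) (fun jq => w (Sum.inr jq)))
            = fun i => w i := by
          funext i
          cases i with
          | inl i => exact (hwu i).symm
          | inr jq => rfl
        rw [helim]
        rw [eval_chartHom N hN w fbar]
        have hmw : (fun i => monMapZ p q N w i) = fun i => w i := by
          funext i
          rw [monMapZ_fix N hdet w hwu]
        rw [hmw]
      rw [hres0, map_zero] at h1
      exact h1.symm
  choose fj hfj1 hfj2 using hfj
  intro I
  apply strictlyAllowableWrt_of
  intro hsub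
  rcases I.eq_empty_or_nonempty with hIe | hIne
  · subst hIe
    have hCI : C ∩ face (Fin q) (∅ : Finset (Fin p)) = C := by
      ext z
      simp [face]
    rw [hCI] at hsub
    set Fbig : MvPolynomial (Fin p ⊕ Fin q) ℝ := htil * ∏ j : Fin p, fj j with hFbig
    have hFvan : Fbig ∈ vanishingIdeal C := by
      intro z hz
      rw [hFbig, map_mul, map_prod]
      by_cases hall : ∀ j : Fin p, z (Sum.inl j) ≠ 0
      · rw [hhtil_van z hz hall, zero_mul]
      · push_neg at hall
        obtain ⟨j, hj⟩ := hall
        rw [Finset.prod_eq_zero (Finset.mem_univ j) (hfj1 j z hz hj), mul_zero]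
    have hFres : restr p q Fbig ≠ 0 := by
      rw [hFbig, map_mul, map_prod]
      exact mul_ne_zero hres (Finset.prod_ne_zero_iff.2 fun j _ => hfj2 j)
    exact not_faceuniv_subset hFvan hFres hsub
  · set φI : Finset (Fin p) := Finset.univ.filter (fun i => ∃ j ∈ I, 1 ≤ N i j) with hφI
    have hφIne : φI.Nonempty := by
      obtain ⟨j, hj⟩ := hIne
      obtain ⟨i, hi⟩ := col_ne_zero hdet j
      exact ⟨i, Finset.mem_filter.2 ⟨Finset.mem_univ _, ⟨j, hj, by have := hN i j; omega⟩⟩⟩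
    have hsubset : C ∩ face (Fin q) I ⊆ monMapZ p q N ⁻¹' (B ∩ face (Fin q) φI) := by
      rintro z ⟨hzC, hzI⟩
      exact ⟨hzC, monMapZ_mem_face N z I hzI⟩
    have hchain : face (Fin q) (Finset.univ : Finset (Fin p))
        ⊆ zariskiClosure (B ∩ face (Fin q) φI) := by
      intro w hw
      have h1 := zariskiClosure_mono hsubset (hsub hw)
      have h2 := zariskiClosure_preimage N hN (B ∩ face (Fin q) φI) h1
      have h3 : monMapZ p q N w = w := monMapZ_fix N hdet w (fun i => hw i (Finset.mem_univ i))
      rw [Set.mem_preimage, h3] at h2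
      exact h2
    exact hasa φI hφIne Finset.univ hchain

end SA
namespace SA

variable {p : ℕ}

/-- The `j`-th column of a matrix. -/
abbrev colv (M : Matrix (Fin p) (Fin p) ℤ) (j : Fin p) : Fin p → ℤ := fun i => M i j

/-- Pairing of a covector `d` with a vector. -/
def dotv (d v : Fin p → ℤ) : ℤ := ∑ i, v i * d i

/-- A matrix (cone) is pure with respect to `d` if all its columns pair with `d`
with the same sign. -/
def PureM (d : Fin p → ℤ) (M : Matrix (Fin p) (Fin p) ℤ) : Prop :=
  (∀ j, 0 ≤ dotv d (colv M j)) ∨ (∀ j, dotv d (colv M j) ≤ 0)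

@[simp] lemma colv_apply (M : Matrix (Fin p) (Fin p) ℤ) (j i : Fin p) :
    colv M j i = M i j := rfl

lemma mem_raysOf {M : Matrix (Fin p) (Fin p) ℤ} {v : Fin p → ℤ} :
    v ∈ raysOf M ↔ ∃ j, colv M j = v := by
  unfold raysOf
  simp [Finset.mem_image]

lemma mem_starSubdiv {F : Finset (Matrix (Fin p) (Fin p) ℤ)} {R : Finset (Fin p → ℤ)}
    {M₁ : Matrix (Fin p) (Fin p) ℤ} (h : M₁ ∈ starSubdiv F R) :
    (M₁ ∈ F ∧ ¬ R ⊆ raysOf M₁) ∨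
      ∃ M ∈ F, R ⊆ raysOf M ∧ ∃ r : Fin p, colv M r ∈ R ∧
        M₁ = M.updateCol r (fun i => ∑ v ∈ R, v i) := by
  unfold starSubdiv at h
  rcases Finset.mem_union.1 h with h | h
  · rw [Finset.mem_filter] at h
    exact .inl ⟨h.1, h.2⟩
  · right
    obtain ⟨M, hM, hM₁⟩ := Finset.mem_biUnion.1 h
    rw [Finset.mem_filter] at hM
    obtain ⟨r, hr, hrEq⟩ := Finset.mem_image.1 hM₁
    rw [Finset.mem_filter] at hr
    exact ⟨M, hM.1, hM.2, r, hr.2, hrEq.symm⟩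

lemma tower_trans {F₀ F₁ F₂ : Finset (Matrix (Fin p) (Fin p) ℤ)}
    (h1 : IsBlowupTower p F₀ F₁) (h2 : IsBlowupTower p F₁ F₂) : IsBlowupTower p F₀ F₂ := by
  induction h2 with
  | refl => exact h1
  | step F h M hM J hJ ih => exact .step F₀ F ih M hM J hJ

lemma tower_preserve (P : Matrix (Fin p) (Fin p) ℤ → Prop)
    (hstep : ∀ M' : Matrix (Fin p) (Fin p) ℤ, P M' → ∀ R : Finset (Fin p → ℤ),
      R ⊆ raysOf M' → ∀ r : Fin p,
      colv M' r ∈ R → P (M'.updateCol r (fun i => ∑ v ∈ R, v i)))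
    {F₀ F₁ : Finset (Matrix (Fin p) (Fin p) ℤ)} (hT : IsBlowupTower p F₀ F₁)
    (h₀ : ∀ M ∈ F₀, P M) :
    ∀ M ∈ F₁, P M := by
  induction hT with
  | refl => exact h₀
  | step F h M hM J hJ ih =>
    intro M₁ hM₁
    rcases mem_starSubdiv hM₁ with ⟨hMF, _⟩ | ⟨M₂, hM₂, hR, r, hrR, hEq⟩
    · exact ih M₁ hMF
    · rw [hEq]
      exact hstep M₂ (ih M₂ hM₂) _ hR r hrR

lemma det_updateCol_finset_sum (M : Matrix (Fin p) (Fin p) ℤ) (r : Fin p)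
    (R : Finset (Fin p → ℤ)) :
    (M.updateCol r (fun i => ∑ v ∈ R, v i)).det = ∑ v ∈ R, (M.updateCol r v).det := by
  classical
  induction R using Finset.induction_on with
  | empty =>
    simp only [Finset.sum_empty]
    exact Matrix.det_eq_zero_of_column_eq_zero r (fun i => by simp [Matrix.updateCol_apply])
  | @insert a s hnot ih =>
    have hcol : (fun i => ∑ v ∈ insert a s, v i) = a + (fun i => ∑ v ∈ s, v i) := by
      funext i
      simp [Finset.sum_insert hnot]
    rw [hcol, Matrix.det_updateCol_add, ih, Finset.sum_insert hnot]

/-- Columns of a unimodular matrix are pairwise distinct. -/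
lemma colv_injective {M : Matrix (Fin p) (Fin p) ℤ} (hdet : M.det = 1) :
    Function.Injective (colv M) := by
  intro a b hab
  by_contra hne
  have := Matrix.det_zero_of_column_eq hne (fun k => congrFun hab k)
  omega

lemma det_step {M : Matrix (Fin p) (Fin p) ℤ} (hdet : M.det = 1)
    {R : Finset (Fin p → ℤ)} (hR : R ⊆ raysOf M) {r : Fin p} (hrR : colv M r ∈ R) :
    (M.updateCol r (fun i => ∑ v ∈ R, v i)).det = 1 := by
  rw [det_updateCol_finset_sum]
  rw [Finset.sum_eq_single_of_mem (colv M r) hrR]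
  · rw [show M.updateCol r (colv M r) = M from Matrix.updateCol_eq_self M r, hdet]
  · intro v hv hvne
    obtain ⟨k, hk⟩ := mem_raysOf.1 (hR hv)
    have hkr : k ≠ r := by
      intro hkr
      exact hvne (by rw [← hk, hkr])
    apply Matrix.det_zero_of_column_eq hkr
    intro i
    rw [Matrix.updateCol_apply, Matrix.updateCol_apply]
    rw [if_neg hkr, if_pos rfl, ← hk]

lemma det_tower {F₀ F₁ : Finset (Matrix (Fin p) (Fin p) ℤ)} (hT : IsBlowupTower p F₀ F₁)
    (h₀ : ∀ M ∈ F₀, M.det = 1) : ∀ M ∈ F₁, M.det = 1 :=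
  tower_preserve (fun M => M.det = 1)
    (fun M' hM' R hR r hrR => det_step hM' hR hrR) hT h₀

lemma dotv_update (d : Fin p → ℤ) (M : Matrix (Fin p) (Fin p) ℤ) (r : Fin p)
    (R : Finset (Fin p → ℤ)) (j : Fin p) :
    dotv d (colv (M.updateCol r (fun i => ∑ v ∈ R, v i)) j)
      = if j = r then ∑ v ∈ R, dotv d v else dotv d (colv M j) := by
  unfold dotv
  by_cases hj : j = r
  · rw [if_pos hj]
    subst hj
    calc ∑ i, colv (M.updateCol j (fun i => ∑ v ∈ R, v i)) j i * d i
        = ∑ i, (∑ v ∈ R, v i) * d i := by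
          refine Finset.sum_congr rfl fun i _ => ?_
          rw [colv_apply, Matrix.updateCol_apply, if_pos rfl]
      _ = ∑ i, ∑ v ∈ R, v i * d i := by
          refine Finset.sum_congr rfl fun i _ => Finset.sum_mul _ _ _
      _ = ∑ v ∈ R, ∑ i, v i * d i := Finset.sum_comm
  · rw [if_neg hj]
    refine Finset.sum_congr rfl fun i _ => ?_
    rw [colv_apply, colv_apply, Matrix.updateCol_apply, if_neg hj]

lemma pure_step {d : Fin p → ℤ} {M : Matrix (Fin p) (Fin p) ℤ} (hP : PureM d M)
    {R : Finset (Fin p → ℤ)} (hR : R ⊆ raysOf M) {r : Fin p} (hrR : colv M r ∈ R) :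
    PureM d (M.updateCol r (fun i => ∑ v ∈ R, v i)) := by
  rcases hP with hP | hP
  · left
    intro j
    rw [dotv_update]
    by_cases hj : j = r
    · rw [if_pos hj]
      refine Finset.sum_nonneg fun v hv => ?_
      obtain ⟨k, hk⟩ := mem_raysOf.1 (hR hv)
      rw [← hk]
      exact hP k
    · rw [if_neg hj]; exact hP j
  · right
    intro j
    rw [dotv_update]
    by_cases hj : j = r
    · rw [if_pos hj]
      refine Finset.sum_nonpos fun v hv => ?_
      obtain ⟨k, hk⟩ := mem_raysOf.1 (hR hv)
      rw [← hk]
      exact hP k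
    · rw [if_neg hj]; exact hP j

lemma pure_tower {d : Fin p → ℤ} {F₀ F₁ : Finset (Matrix (Fin p) (Fin p) ℤ)}
    (hT : IsBlowupTower p F₀ F₁) (h₀ : ∀ M ∈ F₀, PureM d M) : ∀ M ∈ F₁, PureM d M :=
  tower_preserve (PureM d) (fun M' hM' R hR r hrR => pure_step hM' hR hrR) hT h₀

lemma mul_updateCol (A B : Matrix (Fin p) (Fin p) ℤ) (r : Fin p) (c : Fin p → ℤ) :
    A * (B.updateCol r c) = (A * B).updateCol r (A.mulVec c) := by
  ext i j
  by_cases hj : j = r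
  · subst hj
    simp [Matrix.mul_apply, Matrix.updateCol_apply, Matrix.mulVec, dotProduct]
  · simp [Matrix.mul_apply, Matrix.updateCol_apply, hj]

lemma witness_tower {Fb F₀ F₁ : Finset (Matrix (Fin p) (Fin p) ℤ)}
    (hT : IsBlowupTower p F₀ F₁)
    (h₀ : ∀ M' ∈ F₀, ∃ M ∈ Fb, ∀ i j, 0 ≤ (M⁻¹ * M') i j) :
    ∀ M' ∈ F₁, ∃ M ∈ Fb, ∀ i j, 0 ≤ (M⁻¹ * M') i j := by
  refine tower_preserve _ ?_ hT h₀
  intro M' hM' R hR r hrR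
  obtain ⟨M, hM, hpos⟩ := hM'
  refine ⟨M, hM, ?_⟩
  intro i j
  rw [mul_updateCol]
  rw [Matrix.updateCol_apply]
  by_cases hj : j = r
  · rw [if_pos hj]
    have hmv : (M⁻¹).mulVec (fun i => ∑ v ∈ R, v i) i
        = ∑ v ∈ R, (M⁻¹).mulVec v i := by
      simp only [Matrix.mulVec, dotProduct]
      calc ∑ k, M⁻¹ i k * (∑ v ∈ R, v k)
          = ∑ k, ∑ v ∈ R, M⁻¹ i k * v k := by
            refine Finset.sum_congr rfl fun k _ => Finset.mul_sum _ _ _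
        _ = ∑ v ∈ R, ∑ k, M⁻¹ i k * v k := Finset.sum_comm
    rw [hmv]
    refine Finset.sum_nonneg fun v hv => ?_
    obtain ⟨k, hk⟩ := mem_raysOf.1 (hR hv)
    have hv2 : (M⁻¹).mulVec v i = (M⁻¹ * M') i k := by
      rw [← hk]
      simp [Matrix.mulVec, dotProduct, Matrix.mul_apply]
    rw [hv2]
    exact hpos i k
  · rw [if_neg hj]
    exact hpos i j

end SA
namespace SA

variable {p : ℕ}

/-- Maximal absolute value of the pairings. -/
def mxV (v : Fin p → ℤ) : ℕ := Finset.univ.sup fun j => (v j).natAbs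

def cntV (v : Fin p → ℤ) : ℕ := (Finset.univ.filter fun j => (v j).natAbs = mxV v).card

def posV (v : Fin p → ℤ) : ℕ := (Finset.univ.filter fun j => 0 < v j).card

def negV (v : Fin p → ℤ) : ℕ := (Finset.univ.filter fun j => v j < 0).card

def APv (v : Fin p → ℤ) : Prop := ∃ j, (v j).natAbs = mxV v ∧ 0 < v j

def ANv (v : Fin p → ℤ) : Prop := ∃ j, (v j).natAbs = mxV v ∧ v j < 0

open Classical in
noncomputable def tV (v : Fin p → ℤ) : ℕ :=
  if APv v ∧ ANv v then 0 else if APv v then negV v else posV v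

noncomputable def stats (v : Fin p → ℤ) : ℕ × ℕ × ℕ := (mxV v, cntV v, tV v)

def lt3 (a b : ℕ × ℕ × ℕ) : Prop :=
  a.1 < b.1 ∨ (a.1 = b.1 ∧ (a.2.1 < b.2.1 ∨ (a.2.1 = b.2.1 ∧ a.2.2 < b.2.2)))

def enc3 (P : ℕ) (a : ℕ × ℕ × ℕ) : ℕ := (a.1 * (P + 1) + a.2.1) * (P + 1) + a.2.2

lemma cntV_le (v : Fin p → ℤ) : cntV v ≤ p := by
  unfold cntV
  calc (Finset.univ.filter fun j => (v j).natAbs = mxV v).card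
      ≤ (Finset.univ : Finset (Fin p)).card := Finset.card_filter_le _ _
    _ = p := by rw [Finset.card_univ, Fintype.card_fin]

lemma posV_le (v : Fin p → ℤ) : posV v ≤ p := by
  unfold posV
  calc (Finset.univ.filter fun j => 0 < v j).card
      ≤ (Finset.univ : Finset (Fin p)).card := Finset.card_filter_le _ _
    _ = p := by rw [Finset.card_univ, Fintype.card_fin]

lemma negV_le (v : Fin p → ℤ) : negV v ≤ p := by
  unfold negV
  calc (Finset.univ.filter fun j => v j < 0).card
      ≤ (Finset.univ : Finset (Fin p)).card := Finset.card_filter_le _ _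
    _ = p := by rw [Finset.card_univ, Fintype.card_fin]

lemma tV_le (v : Fin p → ℤ) : tV v ≤ p := by
  unfold tV
  split
  · omega
  split
  · exact negV_le v
  · exact posV_le v

lemma enc3_lt_of_lt3 {P : ℕ} {a b : ℕ × ℕ × ℕ} (ha2 : a.2.1 ≤ P) (ha3 : a.2.2 ≤ P)
    (hb2 : b.2.1 ≤ P) (hb3 : b.2.2 ≤ P) (h : lt3 a b) : enc3 P a < enc3 P b := by
  obtain ⟨a1, a2, a3⟩ := a
  obtain ⟨b1, b2, b3⟩ := b
  simp only [lt3, enc3] at *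
  rcases h with h | ⟨rfl, h | ⟨rfl, h⟩⟩
  · have h1 : a1 + 1 ≤ b1 := h
    calc (a1 * (P + 1) + a2) * (P + 1) + a3
        < (a1 * (P + 1) + a2 + 1) * (P + 1) := by nlinarith
      _ ≤ (b1 * (P + 1)) * (P + 1) := by
          have h2 : a1 * (P + 1) + a2 + 1 ≤ b1 * (P + 1) := by nlinarith
          exact Nat.mul_le_mul_right _ h2
      _ ≤ (b1 * (P + 1) + b2) * (P + 1) + b3 := by nlinarith
  · nlinarith
  · nlinarith

lemma lt3_trichotomy (a b : ℕ × ℕ × ℕ) : lt3 a b ∨ a = b ∨ lt3 b a := by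
  obtain ⟨a1, a2, a3⟩ := a
  obtain ⟨b1, b2, b3⟩ := b
  simp only [lt3, Prod.mk.injEq]
  omega

/-- One lemma covering the filter bookkeeping for updated vectors. -/
lemma filter_update (v : Fin p → ℤ) (r : Fin p) (s : ℤ) (Q : ℤ → Prop) [DecidablePred Q]
    (hs : ¬ Q s) :
    (Finset.univ.filter fun j => Q (Function.update v r s j))
      = (Finset.univ.filter fun j => Q (v j)).erase r := by
  ext j
  rw [Finset.mem_filter, Finset.mem_erase, Finset.mem_filter]
  by_cases hj : j = r
  · subst hj
    simp [Function.update_self, hs]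
  · simp [Function.update_of_ne hj, hj]

lemma key_step (v vs : Fin p → ℤ) (ju jw r : Fin p)
    (hvu : 0 < v ju) (hvw : v jw < 0) (hr : r = ju ∨ r = jw)
    (hMs : mxV vs = max (v ju).natAbs (v jw).natAbs)
    (hmx : mxV v = mxV vs)
    (hle : lt3 (stats v) (stats vs) ∨ stats v = stats vs)
    (hA : (v ju).natAbs < mxV vs → 1 ≤ tV vs)
    (hB : (v jw).natAbs < mxV vs → 1 ≤ tV vs) :
    lt3 (stats (Function.update v r (v ju + v jw))) (stats vs) := by
  classical
  set s := v ju + v jw with hsdef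
  set v' := Function.update v r s with hv'
  have hne : ju ≠ jw := by
    intro h
    rw [h] at hvu
    omega
  have hju_le : (v ju).natAbs ≤ mxV vs := by omega
  have hjw_le : (v jw).natAbs ≤ mxV vs := by omega
  have hMs_pos : 1 ≤ mxV vs := by omega
  have hs_lt : s.natAbs < mxV vs := by omega
  have hub : ∀ j, (v j).natAbs ≤ mxV vs := by
    intro j
    rw [← hmx]
    exact Finset.le_sup (f := fun j => (v j).natAbs) (Finset.mem_univ j)
  have hv'r : v' r = s := Function.update_self r s v
  have hv'ne : ∀ j, j ≠ r → v' j = v j := fun j hj => Function.update_of_ne hj s v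
  have hv'ub : ∀ j, (v' j).natAbs ≤ mxV vs := by
    intro j
    by_cases hj : j = r
    · rw [hj, hv'r]; omega
    · rw [hv'ne j hj]; exact hub j
  have hmxv'_le : mxV v' ≤ mxV vs := Finset.sup_le fun j _ => hv'ub j
  have hcnt_t : cntV v < cntV vs ∨ (cntV v = cntV vs ∧ tV v ≤ tV vs) := by
    rcases hle with h | h
    · rcases h with h | ⟨h1, h⟩
      · exfalso
        simp only [stats] at h
        omega
      · simp only [stats] at h
        rcases h with h | ⟨h2, h3⟩
        · exact Or.inl h
        · exact Or.inr ⟨h2, le_of_lt h3⟩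
    · simp only [stats, Prod.mk.injEq] at h
      exact Or.inr ⟨h.2.1, le_of_eq h.2.2⟩
  have hcnt_le : cntV v ≤ cntV vs := by omega
  by_cases hcase : (v r).natAbs = mxV vs
  · -- the replaced column attains the maximum
    have hrmem : r ∈ Finset.univ.filter fun j => (v j).natAbs = mxV v := by
      rw [Finset.mem_filter]
      exact ⟨Finset.mem_univ _, by omega⟩
    have hcnt_pos : 1 ≤ cntV v := by
      unfold cntV
      exact Finset.card_pos.2 ⟨r, hrmem⟩
    by_cases hc1 : cntV v = 1
    · -- the maximum drops
      have honly : ∀ j, j ≠ r → (v j).natAbs < mxV vs := by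
        intro j hj
        obtain ⟨a, ha⟩ := Finset.card_eq_one.1 hc1
        have hra : r = a := by
          have h2 := hrmem
          rw [ha, Finset.mem_singleton] at h2
          exact h2
        have hjnot : j ∉ Finset.univ.filter fun j => (v j).natAbs = mxV v := by
          rw [ha, Finset.mem_singleton, ← hra]
          exact hj
        rw [Finset.mem_filter] at hjnot
        push_neg at hjnot
        have h3 := hjnot (Finset.mem_univ j)
        have h4 := hub j
        omega
      have hlt : mxV v' < mxV vs := by
        refine (Finset.sup_lt_iff (show (⊥ : ℕ) < mxV vs from by
          rw [show (⊥ : ℕ) = 0 from rfl]; omega)).2 ?_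
        intro j _
        by_cases hj : j = r
        · rw [hj, hv'r]; omega
        · rw [hv'ne j hj]; exact honly j hj
      simp only [stats, lt3]
      omega
    · -- another attainer survives
      have h2le : 2 ≤ cntV v := by omega
      obtain ⟨j₁, hj₁mem, hj₁ne⟩ := Finset.exists_mem_ne
        (show 1 < (Finset.univ.filter fun j => (v j).natAbs = mxV v).card from by
          have h5 : cntV v = (Finset.univ.filter fun j => (v j).natAbs = mxV v).card := rfl
          omega) r
      rw [Finset.mem_filter] at hj₁mem
      have hj₁ : (v j₁).natAbs = mxV vs := by omega
      have hmxv' : mxV v' = mxV vs := by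
        refine le_antisymm hmxv'_le ?_
        calc mxV vs = (v' j₁).natAbs := by rw [hv'ne j₁ hj₁ne, hj₁]
          _ ≤ mxV v' := Finset.le_sup (f := fun j => (v' j).natAbs) (Finset.mem_univ j₁)
      have hcnt' : cntV v' = cntV v - 1 := by
        unfold cntV
        rw [hmxv']
        rw [hv', filter_update v r s (fun t => t.natAbs = mxV vs) (by omega)]
        rw [show (Finset.univ.filter fun j => (v j).natAbs = mxV v)
            = Finset.univ.filter fun j => (v j).natAbs = mxV vs from by rw [hmx]] at hrmem
        rw [Finset.card_erase_of_mem hrmem]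
        congr 1
        rw [hmx]
      simp only [stats, lt3]
      omega
  · -- the replaced column does not attain the maximum
    have hcase' : (v r).natAbs < mxV vs := by
      have := hub r
      omega
    -- the other end of the pair attains the maximum, with the corresponding sign facts
    rcases hr with hr | hr
    · -- r = ju
      have hjuMs : (v ju).natAbs < mxV vs := by rw [← hr]; omega
      have hjwMs : (v jw).natAbs = mxV vs := by omega
      have hslt0 : s < 0 := by omega
      have hjwr : jw ≠ r := by rw [hr]; exact hne.symm
      have hmxv' : mxV v' = mxV vs := by
        refine le_antisymm hmxv'_le ?_
        calc mxV vs = (v' jw).natAbs := by rw [hv'ne jw hjwr, hjwMs]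
          _ ≤ mxV v' := Finset.le_sup (f := fun j => (v' j).natAbs) (Finset.mem_univ jw)
      have hrnot : r ∉ Finset.univ.filter fun j => (v j).natAbs = mxV vs := by
        rw [Finset.mem_filter]
        push_neg
        intro _
        omega
      have hcnt' : cntV v' = cntV v := by
        unfold cntV
        rw [hmxv', hmx]
        rw [hv', filter_update v r s (fun t => t.natAbs = mxV vs) (by omega)]
        rw [Finset.erase_eq_of_notMem hrnot]
      have hANv : ANv v := ⟨jw, by omega, hvw⟩
      have hANv' : ANv v' := ⟨jw, by rw [hv'ne jw hjwr]; omega, by rw [hv'ne jw hjwr]; exact hvw⟩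
      have hAPiff : APv v' ↔ APv v := by
        constructor
        · rintro ⟨j, hj1, hj2⟩
          have hjr : j ≠ r := by
            intro hjr
            rw [hjr, hv'r] at hj1
            rw [hmxv'] at hj1
            omega
          rw [hv'ne j hjr] at hj1 hj2
          exact ⟨j, by omega, hj2⟩
        · rintro ⟨j, hj1, hj2⟩
          have hjr : j ≠ r := by
            intro hjr
            rw [hjr] at hj1
            omega
          exact ⟨j, by rw [hv'ne j hjr]; omega, by rw [hv'ne j hjr]; exact hj2⟩
      by_cases hap : APv v
      · have ht : tV v' = 0 := by
          unfold tV
          rw [if_pos ⟨hAPiff.2 hap, hANv'⟩]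
        have htvs : 1 ≤ tV vs := hA hjuMs
        simp only [stats, lt3]
        omega
      · have htv : tV v = posV v := by
          unfold tV
          rw [if_neg (fun hc => hap hc.1), if_neg hap]
        have htv' : tV v' = posV v' := by
          unfold tV
          rw [if_neg (fun hc => hap (hAPiff.1 hc.1)), if_neg (fun hc => hap (hAPiff.1 hc))]
        have hrpos : r ∈ Finset.univ.filter fun j => 0 < v j := by
          rw [Finset.mem_filter]
          exact ⟨Finset.mem_univ _, by rw [hr]; exact hvu⟩
        have hpos' : posV v' = posV v - 1 := by
          unfold posV
          rw [hv', filter_update v r s (fun t => 0 < t) (by omega)]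
          rw [Finset.card_erase_of_mem hrpos]
        have hpos_pos : 1 ≤ posV v := by
          unfold posV
          exact Finset.card_pos.2 ⟨r, hrpos⟩
        simp only [stats, lt3]
        omega
    · -- r = jw
      have hjwMs : (v jw).natAbs < mxV vs := by rw [← hr]; omega
      have hjuMs : (v ju).natAbs = mxV vs := by omega
      have hsgt0 : 0 < s := by omega
      have hjur : ju ≠ r := by rw [hr]; exact hne
      have hmxv' : mxV v' = mxV vs := by
        refine le_antisymm hmxv'_le ?_
        calc mxV vs = (v' ju).natAbs := by rw [hv'ne ju hjur, hjuMs]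
          _ ≤ mxV v' := Finset.le_sup (f := fun j => (v' j).natAbs) (Finset.mem_univ ju)
      have hrnot : r ∉ Finset.univ.filter fun j => (v j).natAbs = mxV vs := by
        rw [Finset.mem_filter]
        push_neg
        intro _
        omega
      have hcnt' : cntV v' = cntV v := by
        unfold cntV
        rw [hmxv', hmx]
        rw [hv', filter_update v r s (fun t => t.natAbs = mxV vs) (by omega)]
        rw [Finset.erase_eq_of_notMem hrnot]
      have hAPv : APv v := ⟨ju, by omega, hvu⟩
      have hAPv' : APv v' := ⟨ju, by rw [hv'ne ju hjur]; omega, by rw [hv'ne ju hjur]; exact hvu⟩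
      have hANiff : ANv v' ↔ ANv v := by
        constructor
        · rintro ⟨j, hj1, hj2⟩
          have hjr : j ≠ r := by
            intro hjr
            rw [hjr, hv'r] at hj2
            omega
          rw [hv'ne j hjr] at hj1 hj2
          exact ⟨j, by omega, hj2⟩
        · rintro ⟨j, hj1, hj2⟩
          have hjr : j ≠ r := by
            intro hjr
            rw [hjr] at hj1
            omega
          exact ⟨j, by rw [hv'ne j hjr]; omega, by rw [hv'ne j hjr]; exact hj2⟩
      by_cases han : ANv v
      · have ht : tV v' = 0 := by
          unfold tV
          rw [if_pos ⟨hAPv', hANiff.2 han⟩]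
        have htvs : 1 ≤ tV vs := hB hjwMs
        simp only [stats, lt3]
        omega
      · have htv : tV v = negV v := by
          unfold tV
          rw [if_neg (fun hc => han hc.2), if_pos hAPv]
        have htv' : tV v' = negV v' := by
          unfold tV
          rw [if_neg (fun hc => han (hANiff.1 hc.2)), if_pos hAPv']
        have hrneg : r ∈ Finset.univ.filter fun j => v j < 0 := by
          rw [Finset.mem_filter]
          exact ⟨Finset.mem_univ _, by rw [hr]; exact hvw⟩
        have hneg' : negV v' = negV v - 1 := by
          unfold negV
          rw [hv', filter_update v r s (fun t => t < 0) (by omega)]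
          rw [Finset.card_erase_of_mem hrneg]
        have hneg_pos : 1 ≤ negV v := by
          unfold negV
          exact Finset.card_pos.2 ⟨r, hrneg⟩
        simp only [stats, lt3]
        omega

end SA
namespace SA

variable {p : ℕ}

noncomputable def valsOf (d : Fin p → ℤ) (M : Matrix (Fin p) (Fin p) ℤ) : Fin p → ℤ :=
  fun j => dotv d (colv M j)

noncomputable def encV (d : Fin p → ℤ) (M : Matrix (Fin p) (Fin p) ℤ) : ℕ :=
  enc3 p (stats (valsOf d M))

open Classical in
noncomputable def badSet (d : Fin p → ℤ) (F : Finset (Matrix (Fin p) (Fin p) ℤ)) :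
    Finset (Matrix (Fin p) (Fin p) ℤ) :=
  F.filter fun M => ¬ PureM d M

lemma mem_badSet {d : Fin p → ℤ} {F : Finset (Matrix (Fin p) (Fin p) ℤ)}
    {M : Matrix (Fin p) (Fin p) ℤ} : M ∈ badSet d F ↔ M ∈ F ∧ ¬ PureM d M := by
  classical
  unfold badSet
  exact Finset.mem_filter

noncomputable def gmx (d : Fin p → ℤ) (F : Finset (Matrix (Fin p) (Fin p) ℤ)) : ℕ :=
  (badSet d F).sup (encV d)

noncomputable def gcnt (d : Fin p → ℤ) (F : Finset (Matrix (Fin p) (Fin p) ℤ)) : ℕ :=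
  ((badSet d F).filter fun M => encV d M = gmx d F).card

lemma not_pureM_iff {d : Fin p → ℤ} {M : Matrix (Fin p) (Fin p) ℤ} :
    ¬ PureM d M ↔ (∃ j, 0 < valsOf d M j) ∧ ∃ j, valsOf d M j < 0 := by
  unfold PureM valsOf
  push_neg
  constructor
  · rintro ⟨h1, h2⟩
    obtain ⟨j1, hj1⟩ := h1
    obtain ⟨j2, hj2⟩ := h2
    exact ⟨⟨j2, hj2⟩, ⟨j1, hj1⟩⟩
  · rintro ⟨⟨j2, hj2⟩, ⟨j1, hj1⟩⟩
    exact ⟨⟨j1, hj1⟩, ⟨j2, hj2⟩⟩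

lemma encV_lt_of_lt3 {d : Fin p → ℤ} {M M' : Matrix (Fin p) (Fin p) ℤ}
    (h : lt3 (stats (valsOf d M)) (stats (valsOf d M'))) : encV d M < encV d M' := by
  unfold encV
  exact enc3_lt_of_lt3 (cntV_le _) (tV_le _) (cntV_le _) (tV_le _) h

lemma lt3_or_eq_of_encV_le {d : Fin p → ℤ} {M M' : Matrix (Fin p) (Fin p) ℤ}
    (h : encV d M ≤ encV d M') :
    lt3 (stats (valsOf d M)) (stats (valsOf d M')) ∨
      stats (valsOf d M) = stats (valsOf d M') := by
  rcases lt3_trichotomy (stats (valsOf d M)) (stats (valsOf d M')) with h1 | h1 | h1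
  · exact Or.inl h1
  · exact Or.inr h1
  · exfalso
    have := encV_lt_of_lt3 h1
    omega

lemma subdiv_progress (d : Fin p → ℤ) (F₀ : Finset (Matrix (Fin p) (Fin p) ℤ))
    (hdet : ∀ M ∈ F₀, M.det = 1) (hbad : (badSet d F₀).Nonempty) :
    ∃ F₁, IsBlowupTower p F₀ F₁ ∧
      (gmx d F₁ < gmx d F₀ ∨ (gmx d F₁ = gmx d F₀ ∧ gcnt d F₁ < gcnt d F₀)) := by
  classical
  obtain ⟨σs, hσsBad, hσsMax⟩ := Finset.exists_max_image (badSet d F₀) (encV d) hbad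
  have hσsF : σs ∈ F₀ := (mem_badSet.1 hσsBad).1
  have hσsNP : ¬ PureM d σs := (mem_badSet.1 hσsBad).2
  have hdets : σs.det = 1 := hdet σs hσsF
  obtain ⟨⟨j2, hj2⟩, ⟨j1, hj1⟩⟩ := not_pureM_iff.1 hσsNP
  obtain ⟨ju, _, hjuMax⟩ := Finset.exists_max_image Finset.univ (valsOf d σs)
    ⟨j2, Finset.mem_univ j2⟩
  obtain ⟨jw, _, hjwMin⟩ := Finset.exists_min_image Finset.univ (valsOf d σs)
    ⟨j1, Finset.mem_univ j1⟩
  have hvju : 0 < valsOf d σs ju := lt_of_lt_of_le hj2 (hjuMax j2 (Finset.mem_univ _))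
  have hvjw : valsOf d σs jw < 0 := lt_of_le_of_lt (hjwMin j1 (Finset.mem_univ _)) hj1
  have hne : ju ≠ jw := by
    intro h
    rw [h] at hvju
    omega
  have hMs : mxV (valsOf d σs) = max (valsOf d σs ju).natAbs (valsOf d σs jw).natAbs := by
    apply le_antisymm
    · refine Finset.sup_le fun j _ => ?_
      have h1 := hjuMax j (Finset.mem_univ j)
      have h2 := hjwMin j (Finset.mem_univ j)
      omega
    · refine max_le ?_ ?_
      · exact Finset.le_sup (f := fun j => (valsOf d σs j).natAbs) (Finset.mem_univ ju)
      · exact Finset.le_sup (f := fun j => (valsOf d σs j).natAbs) (Finset.mem_univ jw)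
  have hA : (valsOf d σs ju).natAbs < mxV (valsOf d σs) → 1 ≤ tV (valsOf d σs) := by
    intro hlt
    have hnap : ¬ APv (valsOf d σs) := by
      rintro ⟨j, hja, hjp⟩
      have := hjuMax j (Finset.mem_univ j)
      omega
    have ht : tV (valsOf d σs) = posV (valsOf d σs) := by
      unfold tV
      rw [if_neg (fun hc => hnap hc.1), if_neg hnap]
    rw [ht]
    exact Finset.card_pos.2 ⟨ju, Finset.mem_filter.2 ⟨Finset.mem_univ _, hvju⟩⟩
  have hB : (valsOf d σs jw).natAbs < mxV (valsOf d σs) → 1 ≤ tV (valsOf d σs) := by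
    intro hlt
    have hnan : ¬ ANv (valsOf d σs) := by
      rintro ⟨j, hja, hjp⟩
      have := hjwMin j (Finset.mem_univ j)
      omega
    by_cases hap : APv (valsOf d σs)
    · have ht : tV (valsOf d σs) = negV (valsOf d σs) := by
        unfold tV
        rw [if_neg (fun hc => hnan hc.2), if_pos hap]
      rw [ht]
      exact Finset.card_pos.2 ⟨jw, Finset.mem_filter.2 ⟨Finset.mem_univ _, hvjw⟩⟩
    · have ht : tV (valsOf d σs) = posV (valsOf d σs) := by
        unfold tV
        rw [if_neg (fun hc => hap hc.1), if_neg hap]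
      rw [ht]
      exact Finset.card_pos.2 ⟨ju, Finset.mem_filter.2 ⟨Finset.mem_univ _, hvju⟩⟩
  set J : Finset (Fin p) := {ju, jw} with hJ
  have hune : colv σs ju ≠ colv σs jw := by
    intro h
    have h2 : valsOf d σs ju = valsOf d σs jw := by
      unfold valsOf
      rw [h]
    omega
  have hRpair : colSet σs J = {colv σs ju, colv σs jw} := by
    rw [hJ]
    unfold colSet
    rw [Finset.image_insert, Finset.image_singleton]
  have hRrays : colSet σs J ⊆ raysOf σs := by
    unfold colSet raysOf
    exact Finset.image_subset_image (Finset.subset_univ J)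
  have hsumR : ∀ i, (∑ v ∈ colSet σs J, v i) = colv σs ju i + colv σs jw i := by
    intro i
    rw [hRpair, Finset.sum_pair hune]
  have hsumdot : (∑ v ∈ colSet σs J, dotv d v) = valsOf d σs ju + valsOf d σs jw := by
    rw [hRpair, Finset.sum_pair hune]
    rfl
  set F₁ := starSubdiv F₀ (colSet σs J) with hF₁
  have hTower : IsBlowupTower p F₀ F₁ :=
    .step F₀ F₀ (.refl F₀) σs hσsF J (by
      rw [hJ, Finset.card_insert_of_notMem (by simp [hne]), Finset.card_singleton])
  -- σs is not a member of the subdivided fan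
  have hσsnot : σs ∉ F₁ := by
    intro hmem
    rcases mem_starSubdiv hmem with ⟨_, hnR⟩ | ⟨M, hMF, hRM, r, hrR, hEq⟩
    · exact hnR hRrays
    · -- σs = M.updateCol r (sum of the two rays)
      have hcolr : ∀ i, σs i r = colv σs ju i + colv σs jw i := by
        intro i
        have h0 : σs i r = (M.updateCol r fun i => ∑ v ∈ colSet σs J, v i) i r := by
          conv_lhs => rw [hEq]
        rw [h0, Matrix.updateCol_apply, if_pos rfl]
        exact hsumR i
      have hrju : r ≠ ju := by
        intro hr
        have hw0 : ∀ i, colv σs jw i = 0 := by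
          intro i
          have := hcolr i
          rw [hr] at this
          have h2 : colv σs ju i = σs i ju := rfl
          omega
        have : valsOf d σs jw = 0 := by
          unfold valsOf dotv
          refine Finset.sum_eq_zero fun i _ => by rw [hw0 i, zero_mul]
        omega
      have hrjw : r ≠ jw := by
        intro hr
        have hu0 : ∀ i, colv σs ju i = 0 := by
          intro i
          have := hcolr i
          rw [hr] at this
          have h2 : colv σs jw i = σs i jw := rfl
          omega
        have : valsOf d σs ju = 0 := by
          unfold valsOf dotv
          refine Finset.sum_eq_zero fun i _ => by rw [hu0 i, zero_mul]
        omega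
      -- kernel vector
      set x : Fin p → ℤ := fun k => (if k = ju then (1:ℤ) else 0) + (if k = jw then 1 else 0)
        - (if k = r then 1 else 0) with hx
      have hmv : σs.mulVec x = 0 := by
        funext i
        show ∑ k, σs i k * x k = 0
        rw [hx]
        simp only [mul_sub, mul_add, mul_ite, mul_one, mul_zero]
        rw [Finset.sum_sub_distrib, Finset.sum_add_distrib]
        simp only [Finset.sum_ite_eq', Finset.mem_univ, if_true]
        have h1 := hcolr i
        have h2 : colv σs ju i = σs i ju := rfl
        have h3 : colv σs jw i = σs i jw := rfl
        omega
      have hx0 : x = 0 := by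
        have h1 : (σs⁻¹ * σs).mulVec x = x := by
          rw [Matrix.nonsing_inv_mul σs (by rw [hdets]; exact isUnit_one), Matrix.one_mulVec]
        rw [← h1, ← Matrix.mulVec_mulVec, hmv, Matrix.mulVec_zero]
      have : x ju = 1 := by
        rw [hx]
        simp [hne, hrju.symm]
      rw [hx0] at this
      simp at this
  -- every nonpure cone of the new fan
  have hKey : ∀ M₁ ∈ F₁, ¬ PureM d M₁ →
      encV d M₁ ≤ encV d σs ∧ (encV d M₁ = encV d σs → M₁ ∈ F₀) := by
    intro M₁ hM₁ hM₁np
    rcases mem_starSubdiv hM₁ with ⟨hMF, _⟩ | ⟨M, hMF, hRM, r, hrR, hEq⟩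
    · exact ⟨hσsMax M₁ (mem_badSet.2 ⟨hMF, hM₁np⟩), fun _ => hMF⟩
    · -- children strictly decrease
      obtain ⟨ju', hju'⟩ := mem_raysOf.1 (hRM (by rw [hRpair]; exact Finset.mem_insert_self _ _))
      obtain ⟨jw', hjw'⟩ := mem_raysOf.1 (hRM (by
        rw [hRpair]
        exact Finset.mem_insert.2 (Or.inr (Finset.mem_singleton_self _))))
      have hdetM : M.det = 1 := hdet M hMF
      have hvalju' : valsOf d M ju' = valsOf d σs ju := by
        unfold valsOf
        rw [hju']
      have hvaljw' : valsOf d M jw' = valsOf d σs jw := by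
        unfold valsOf
        rw [hjw']
      have hju'ne : ju' ≠ jw' := by
        intro h
        rw [h, hvaljw'] at hvalju'
        omega
      have hMnp : ¬ PureM d M := by
        rw [not_pureM_iff]
        exact ⟨⟨ju', by omega⟩, ⟨jw', by omega⟩⟩
      have hMbad : M ∈ badSet d F₀ := mem_badSet.2 ⟨hMF, hMnp⟩
      have hle := lt3_or_eq_of_encV_le (hσsMax M hMbad)
      have hr : r = ju' ∨ r = jw' := by
        have := hrR
        rw [hRpair, Finset.mem_insert, Finset.mem_singleton] at this
        rcases this with h | h
        · exact Or.inl (colv_injective hdetM (by rw [h, hju']))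
        · exact Or.inr (colv_injective hdetM (by rw [h, hjw']))
      have hvals₁ : valsOf d M₁ = Function.update (valsOf d M) r
          (valsOf d M ju' + valsOf d M jw') := by
        funext j
        rw [hEq]
        have h1 : valsOf d (M.updateCol r fun i => ∑ v ∈ colSet σs J, v i) j
            = if j = r then ∑ v ∈ colSet σs J, dotv d v else valsOf d M j := by
          unfold valsOf
          exact dotv_update d M r (colSet σs J) j
        rw [h1, Function.update_apply]
        by_cases hj : j = r
        · rw [if_pos hj, if_pos hj, hsumdot, hvalju', hvaljw']
        · rw [if_neg hj, if_neg hj]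
      have hmxge : mxV (valsOf d σs) ≤ mxV (valsOf d M) := by
        rw [hMs]
        refine max_le ?_ ?_
        · rw [← hvalju']
          exact Finset.le_sup (f := fun j => (valsOf d M j).natAbs) (Finset.mem_univ ju')
        · rw [← hvaljw']
          exact Finset.le_sup (f := fun j => (valsOf d M j).natAbs) (Finset.mem_univ jw')
      have hmxle : mxV (valsOf d M) ≤ mxV (valsOf d σs) := by
        rcases hle with h | h
        · rcases h with h | ⟨h1, _⟩
          · exact le_of_lt h
          · exact le_of_eq h1
        · simp only [stats, Prod.mk.injEq] at h
          exact le_of_eq h.1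
      have hkey := key_step (valsOf d M) (valsOf d σs) ju' jw' r
        (by omega) (by omega) hr
        (by rw [hvalju', hvaljw']; exact hMs)
        (by omega) hle
        (by rw [hvalju']; exact hA) (by rw [hvaljw']; exact hB)
      have hlt : encV d M₁ < encV d σs := by
        unfold encV
        refine enc3_lt_of_lt3 (cntV_le _) (tV_le _) (cntV_le _) (tV_le _) ?_
        rw [hvals₁]
        exact hkey
      exact ⟨le_of_lt hlt, fun h => absurd h (by omega)⟩
  have hgmx : gmx d F₀ = encV d σs :=
    le_antisymm (Finset.sup_le hσsMax) (Finset.le_sup hσsBad)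
  have hgmx1le : gmx d F₁ ≤ gmx d F₀ := by
    rw [hgmx]
    refine Finset.sup_le fun M₁ hM₁ => ?_
    have h1 := mem_badSet.1 hM₁
    exact (hKey M₁ h1.1 h1.2).1
  rcases lt_or_eq_of_le hgmx1le with h | h
  · exact ⟨F₁, hTower, Or.inl h⟩
  · refine ⟨F₁, hTower, Or.inr ⟨h, ?_⟩⟩
    have hmemσs : σs ∈ (badSet d F₀).filter fun M => encV d M = gmx d F₀ :=
      Finset.mem_filter.2 ⟨hσsBad, hgmx.symm⟩
    have hsub2 : (badSet d F₁).filter (fun M => encV d M = gmx d F₁)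
        ⊆ ((badSet d F₀).filter fun M => encV d M = gmx d F₀).erase σs := by
      intro M₁ hM₁
      rw [Finset.mem_filter] at hM₁
      obtain ⟨hM₁b, hM₁e⟩ := hM₁
      have hM₁bb := mem_badSet.1 hM₁b
      have hKeyM := hKey M₁ hM₁bb.1 hM₁bb.2
      have hM₁e' : encV d M₁ = encV d σs := by rw [hM₁e, h, hgmx]
      have hM₁F₀ : M₁ ∈ F₀ := hKeyM.2 hM₁e'
      refine Finset.mem_erase.2 ⟨?_, Finset.mem_filter.2
        ⟨mem_badSet.2 ⟨hM₁F₀, hM₁bb.2⟩, by rw [hgmx]; exact hM₁e'⟩⟩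
      intro heq
      rw [heq] at hM₁bb
      exact hσsnot hM₁bb.1
    have hcard := Finset.card_le_card hsub2
    rw [Finset.card_erase_of_mem hmemσs] at hcard
    have hpos : 1 ≤ ((badSet d F₀).filter fun M => encV d M = gmx d F₀).card :=
      Finset.card_pos.2 ⟨σs, hmemσs⟩
    unfold gcnt
    omega

end SA
namespace SA

variable {p : ℕ}

lemma subdiv_single (d : Fin p → ℤ) :
    ∀ n : ℕ, ∀ c : ℕ, ∀ F₀ : Finset (Matrix (Fin p) (Fin p) ℤ),
      (∀ M ∈ F₀, M.det = 1) → gmx d F₀ = n → gcnt d F₀ = c →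
      ∃ F₁, IsBlowupTower p F₀ F₁ ∧ ∀ M ∈ F₁, PureM d M := by
  intro n
  induction n using Nat.strong_induction_on with
  | _ n ihn =>
    intro c
    induction c using Nat.strong_induction_on with
    | _ c ihc =>
      intro F₀ hdet hn hc
      by_cases hbad : (badSet d F₀).Nonempty
      · obtain ⟨F₁, hT, hprog⟩ := subdiv_progress d F₀ hdet hbad
        have hdet₁ : ∀ M ∈ F₁, M.det = 1 := det_tower hT hdet
        rcases hprog with h | ⟨h1, h2⟩
        · obtain ⟨F₂, hT₂, hP⟩ := ihn (gmx d F₁) (by omega) (gcnt d F₁) F₁ hdet₁ rfl rfl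
          exact ⟨F₂, tower_trans hT hT₂, hP⟩
        · obtain ⟨F₂, hT₂, hP⟩ := ihc (gcnt d F₁) (by omega) F₁ hdet₁ (by omega) rfl
          exact ⟨F₂, tower_trans hT hT₂, hP⟩
      · refine ⟨F₀, .refl F₀, fun M hM => ?_⟩
        by_contra hnp
        exact hbad ⟨M, mem_badSet.2 ⟨hM, hnp⟩⟩

lemma subdiv_many (D : Finset (Fin p → ℤ)) :
    ∀ F₀ : Finset (Matrix (Fin p) (Fin p) ℤ), (∀ M ∈ F₀, M.det = 1) →
    ∃ F₁, IsBlowupTower p F₀ F₁ ∧ ∀ M ∈ F₁, ∀ d ∈ D, PureM d M := by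
  classical
  induction D using Finset.induction_on with
  | empty =>
    intro F₀ _
    exact ⟨F₀, .refl F₀, fun M _ d hd => absurd hd (Finset.notMem_empty d)⟩
  | @insert d D' hd ih =>
    intro F₀ hdet
    obtain ⟨F₁, hT₁, hP₁⟩ := subdiv_single d (gmx d F₀) (gcnt d F₀) F₀ hdet rfl rfl
    obtain ⟨F₂, hT₂, hP₂⟩ := ih F₁ (det_tower hT₁ hdet)
    refine ⟨F₂, tower_trans hT₁ hT₂, ?_⟩
    intro M hM d' hd'
    rcases Finset.mem_insert.1 hd' with rfl | hd'
    · exact pure_tower hT₂ hP₁ M hM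
    · exact hP₂ M hM d' hd'

end SA
namespace SA

variable {p q : ℕ}

lemma exists_min_of_total {X : Type} (le : X → X → Prop)
    (htrans : ∀ a b c, le a b → le b c → le a c) :
    ∀ s : Finset X, s.Nonempty → (∀ a ∈ s, ∀ b ∈ s, le a b ∨ le b a) →
    ∃ a ∈ s, ∀ b ∈ s, le a b := by
  classical
  intro s
  induction s using Finset.induction_on with
  | empty =>
    intro h
    exact absurd h (by simp)
  | @insert x t hx ih =>
    intro _ htot
    by_cases ht : t.Nonempty
    · obtain ⟨a, ha, hmin⟩ := ih ht (fun a ha b hb =>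
        htot a (Finset.mem_insert_of_mem ha) b (Finset.mem_insert_of_mem hb))
      rcases htot a (Finset.mem_insert_of_mem ha) x (Finset.mem_insert_self x t) with h | h
      · refine ⟨a, Finset.mem_insert_of_mem ha, ?_⟩
        intro b hb
        rcases Finset.mem_insert.1 hb with rfl | hb
        · exact h
        · exact hmin b hb
      · refine ⟨x, Finset.mem_insert_self x t, ?_⟩
        intro b hb
        rcases Finset.mem_insert.1 hb with rfl | hb
        · rcases htot b (by simp) b (by simp) with h2 | h2 <;> exact h2
        · exact htrans x a b h (hmin b hb)
    · rw [Finset.not_nonempty_iff_eq_empty] at ht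
      subst ht
      refine ⟨x, Finset.mem_insert_self x _, ?_⟩
      intro b hb
      rcases Finset.mem_insert.1 hb with rfl | hb
      · rcases htot b (by simp) b (by simp) with h2 | h2 <;> exact h2
      · exact absurd hb (by simp)

lemma dot_col_vecMul (a : Fin p → ℤ) (A B : Matrix (Fin p) (Fin p) ℤ) (j : Fin p) :
    (∑ i, colv B j i * Matrix.vecMul a A i) = ∑ i, a i * (A * B) i j := by
  calc ∑ i, colv B j i * Matrix.vecMul a A i
      = ∑ i, ∑ k, B i j * (a k * A k i) := by
        refine Finset.sum_congr rfl fun i _ => ?_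
        rw [colv_apply]
        rw [show Matrix.vecMul a A i = ∑ k, a k * A k i from by
          simp [Matrix.vecMul, dotProduct]]
        rw [Finset.mul_sum]
    _ = ∑ k, ∑ i, B i j * (a k * A k i) := Finset.sum_comm
    _ = ∑ k, a k * (A * B) k j := by
        refine Finset.sum_congr rfl fun k _ => ?_
        rw [Matrix.mul_apply, Finset.mul_sum]
        refine Finset.sum_congr rfl fun i _ => by ring

end SA

theorem statement_10' (p q : ℕ) (F : Finset (Matrix (Fin p) (Fin p) ℤ))
    (hF : SA.IsBlowupFan p F)
    (B : Matrix (Fin p) (Fin p) ℤ → Set (Euc (Fin p ⊕ Fin q)))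
    (hclosed : ∀ M ∈ F, IsClosed (B M)) (hsa : ∀ M ∈ F, SA.IsSemialgebraic (B M))
    (hcompat : SA.CompatibleFamily p q F B)
    (hdim : ∀ M ∈ F, SA.dim (B M) < (((p + q : ℕ) : ℕ∞) : WithBot ℕ∞))
    (hasa : ∀ M ∈ F, SA.AlmostStrictlyAllowable (B M)) :
    ∃ F' : Finset (Matrix (Fin p) (Fin p) ℤ), SA.IsBlowupTower p F F' ∧
      (∀ M' ∈ F', ∃ M ∈ F, ∀ i j, 0 ≤ (M⁻¹ * M') i j) ∧
      ∀ M' ∈ F', ∀ M ∈ F, (∀ i j, 0 ≤ (M⁻¹ * M') i j) →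
        SA.StrictlyAllowable (SA.monMapZ p q (M⁻¹ * M') ⁻¹' B M) := by
  classical
  have hdetF : ∀ M ∈ F, M.det = 1 := SA.det_tower hF (by
    intro M hM
    rw [Finset.mem_singleton] at hM
    rw [hM, Matrix.det_one])
  have hex : ∀ M : Matrix (Fin p) (Fin p) ℤ, M ∈ F →
      ∃ h : MvPolynomial (Fin p ⊕ Fin q) ℝ, h ≠ 0 ∧ h ∈ SA.vanishingIdeal (B M) :=
    fun M hM => SA.exists_ne_zero_vanishing (hdim M hM)
  choose hpol hpol0 hpolvan using hex
  set D : Finset (Fin p → ℤ) := F.attach.biUnion (fun M =>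
    (((hpol M.1 M.2).support.image
        (fun σ => Matrix.vecMul (fun i => ((σ (Sum.inl i) : ℤ))) (M.1)⁻¹)) ×ˢ
      ((hpol M.1 M.2).support.image
        (fun σ => Matrix.vecMul (fun i => ((σ (Sum.inl i) : ℤ))) (M.1)⁻¹))).image
      fun ab => ab.1 - ab.2) with hD
  obtain ⟨F', hT', hPure⟩ := SA.subdiv_many D F hdetF
  have hdetF' : ∀ M ∈ F', M.det = 1 := SA.det_tower hT' hdetF
  refine ⟨F', hT', ?_, ?_⟩
  · refine SA.witness_tower hT' ?_
    intro M' hM'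
    refine ⟨M', hM', ?_⟩
    intro i j
    rw [Matrix.nonsing_inv_mul M' (by rw [hdetF M' hM']; exact isUnit_one)]
    by_cases hij : i = j <;> simp [Matrix.one_apply, hij]
  · intro M' hM' M hM hnn
    have hdetM : M.det = 1 := hdetF M hM
    have hdetM' : M'.det = 1 := hdetF' M' hM'
    have hdetMinv : (M⁻¹).det = 1 := by
      rw [Matrix.det_nonsing_inv, hdetM]
      simp
    have hdetN : (M⁻¹ * M').det = 1 := by
      rw [Matrix.det_mul, hdetMinv, hdetM', one_mul]
    apply SA.chart_strictlyAllowable (M⁻¹ * M') hnn hdetN (hasa M hM)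
      (hpol0 M hM) (hpolvan M hM)
    -- adaptedness of the chart to the Newton polyhedron of the chosen polynomial
    have hsupp : (hpol M hM).support.Nonempty := by
      rw [Finset.nonempty_iff_ne_empty, Ne, MvPolynomial.support_eq_empty]
      exact hpol0 M hM
    have htot : ∀ σ ∈ (hpol M hM).support, ∀ τ ∈ (hpol M hM).support,
        (∀ j : Fin p, (∑ i : Fin p, ((σ (Sum.inl i) : ℤ)) * (M⁻¹ * M') i j)
            ≤ ∑ i : Fin p, ((τ (Sum.inl i) : ℤ)) * (M⁻¹ * M') i j) ∨
        (∀ j : Fin p, (∑ i : Fin p, ((τ (Sum.inl i) : ℤ)) * (M⁻¹ * M') i j)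
            ≤ ∑ i : Fin p, ((σ (Sum.inl i) : ℤ)) * (M⁻¹ * M') i j) := by
      intro σ hσ τ hτ
      have hdD : (Matrix.vecMul (fun i => ((σ (Sum.inl i) : ℤ))) M⁻¹
          - Matrix.vecMul (fun i => ((τ (Sum.inl i) : ℤ))) M⁻¹) ∈ D := by
        rw [hD]
        refine Finset.mem_biUnion.2 ⟨⟨M, hM⟩, Finset.mem_attach _ _, ?_⟩
        refine Finset.mem_image.2 ⟨⟨Matrix.vecMul (fun i => ((σ (Sum.inl i) : ℤ))) M⁻¹,
          Matrix.vecMul (fun i => ((τ (Sum.inl i) : ℤ))) M⁻¹⟩, ?_, rfl⟩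
        refine Finset.mem_product.2 ⟨?_, ?_⟩
        · exact Finset.mem_image.2 ⟨σ, hσ, rfl⟩
        · exact Finset.mem_image.2 ⟨τ, hτ, rfl⟩
      have hpure := hPure M' hM' _ hdD
      have h3 : ∀ j : Fin p, SA.dotv (Matrix.vecMul (fun i => ((σ (Sum.inl i) : ℤ))) M⁻¹
            - Matrix.vecMul (fun i => ((τ (Sum.inl i) : ℤ))) M⁻¹) (SA.colv M' j)
          = (∑ i : Fin p, ((σ (Sum.inl i) : ℤ)) * (M⁻¹ * M') i j)
            - ∑ i : Fin p, ((τ (Sum.inl i) : ℤ)) * (M⁻¹ * M') i j := by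
        intro j
        unfold SA.dotv
        rw [← SA.dot_col_vecMul (fun i => ((σ (Sum.inl i) : ℤ))) M⁻¹ M' j,
          ← SA.dot_col_vecMul (fun i => ((τ (Sum.inl i) : ℤ))) M⁻¹ M' j,
          ← Finset.sum_sub_distrib]
        refine Finset.sum_congr rfl fun i _ => ?_
        rw [Pi.sub_apply]
        ring
      rcases hpure with h | h
      · right
        intro j
        have h2 := h j
        rw [h3 j] at h2
        linarith
      · left
        intro j
        have h2 := h j
        rw [h3 j] at h2
        linarith
    obtain ⟨σ₀, hσ₀, hmin⟩ := SA.exists_min_of_total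
      (fun σ τ => ∀ j : Fin p, (∑ i : Fin p, ((σ (Sum.inl i) : ℤ)) * (M⁻¹ * M') i j)
        ≤ ∑ i : Fin p, ((τ (Sum.inl i) : ℤ)) * (M⁻¹ * M') i j)
      (fun a b c hab hbc j => le_trans (hab j) (hbc j))
      (hpol M hM).support hsupp htot
    exact ⟨σ₀, hσ₀, hmin⟩


/-- Let `S' → ℝ^n = ℝ^p × ℝ^q` be a succession of permissible blow-ups
(recorded by its fan `F` of monomial charts), and let `B` be a closed semi-algebraic
subset of `S'` (given by its compatible family of traces in the charts) with `dim B < n`,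
which is almost strictly allowable in `S'`. Then there is a succession of permissible
blow-ups `μ : S̃' → S'` (a tower `F'` over `F`) such that `μ⁻¹(B)` is strictly allowable;
in each chart `M' ∈ F'` of `S̃'`, lying over a chart `M ∈ F` of `S'` through the monomial
map with exponent matrix `M⁻¹M'`, this reads as the strict allowability of the preimage
of the trace of `B`. -/
theorem statement_10 (p q : ℕ) (F : Finset (Matrix (Fin p) (Fin p) ℤ))
    (hF : SA.IsBlowupFan p F)
    (B : Matrix (Fin p) (Fin p) ℤ → Set (Euc (Fin p ⊕ Fin q)))
    (hclosed : ∀ M ∈ F, IsClosed (B M)) (hsa : ∀ M ∈ F, SA.IsSemialgebraic (B M))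
    (hcompat : SA.CompatibleFamily p q F B)
    (hdim : ∀ M ∈ F, SA.dim (B M) < (((p + q : ℕ) : ℕ∞) : WithBot ℕ∞))
    (hasa : ∀ M ∈ F, SA.AlmostStrictlyAllowable (B M)) :
    ∃ F' : Finset (Matrix (Fin p) (Fin p) ℤ), SA.IsBlowupTower p F F' ∧
      (∀ M' ∈ F', ∃ M ∈ F, ∀ i j, 0 ≤ (M⁻¹ * M') i j) ∧
      ∀ M' ∈ F', ∀ M ∈ F, (∀ i j, 0 ≤ (M⁻¹ * M') i j) →
        SA.StrictlyAllowable (SA.monMapZ p q (M⁻¹ * M') ⁻¹' B M) := by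
  exact statement_10' p q F hF B hclosed hsa hcompat hdim hasa
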